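/- Let N be even, let G₀ be the subgroup generated by Z 1, …, Z N, and let G be obtained from G₀ by finitely many measurement-updates G ↦ Meas(G, M, ε) where each measured operator M is either Z i (1 ≤ i ≤ N) or g i = X(i−1) Z i X(i+1) (2 ≤ i ≤ N−1) and each outcome sign ε ∈ {1, −1} is arbitrary. Then there exists a partition {A_1, …, A_k} of {1, …, N} such that every block A_j consists of sites of a single parity (all odd or all even), and there exist signs ε_s ∈ {1, −1} for each s, with G equal to the subgroup generated by { ε_s · s : s ∈ ⋃_j 𝒮(A_j) }. -/

import Mathlib

open scoped Classical
open scoped Matrix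
noncomputable section
namespace QStab

/-- The space of operators (matrices) on a chain of qubits indexed by `ι`. -/
abbrev Op (ι : Type*) [Fintype ι] [DecidableEq ι] : Type _ :=
  Matrix (ι → Fin 2) (ι → Fin 2) ℂ

variable {ι : Type*} [Fintype ι] [DecidableEq ι]

/-- The Pauli `X` operator at site `i`. -/
def PX (i : ι) : Op ι :=
  Matrix.of fun f g => if f = Function.update g i (g i + 1) then 1 else 0

/-- The Pauli `Z` operator at site `i`. -/
def PZ (i : ι) : Op ι :=
  Matrix.of fun f g => if f = g then ((-1 : ℂ)) ^ ((f i : ℕ)) else 0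

/-- The (ordered) product `∏ i, (X i)^(a i)`. -/
def XProd (a : ι → Fin 2) : Op ι :=
  (Finset.univ.toList.map fun i => PX i ^ ((a i : ℕ))).prod

/-- The (ordered) product `∏ i, (Z i)^(b i)`. -/
def ZProd (b : ι → Fin 2) : Op ι :=
  (Finset.univ.toList.map fun i => PZ i ^ ((b i : ℕ))).prod

/-- `c` is one of the allowed phases `1, −1, i, −i` of a Pauli string. -/
def IsPhase (c : ℂ) : Prop := c = 1 ∨ c = -1 ∨ c = Complex.I ∨ c = -Complex.I

/-- `M` is a Pauli string: `M = c • (∏ i, (X i)^(a i)) * (∏ i, (Z i)^(b i))`. -/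
def IsPauli (M : Op ι) : Prop :=
  ∃ (c : ℂ) (a b : ι → Fin 2), IsPhase c ∧ M = c • (XProd a * ZProd b)

/-- `M` is a Pauli string acting as the identity on every site outside `A`. -/
def IsPauliSupportedOn (A : Finset ι) (M : Op ι) : Prop :=
  ∃ (c : ℂ) (a b : ι → Fin 2), IsPhase c ∧ (∀ i, i ∉ A → a i = 0 ∧ b i = 0) ∧
    M = c • (XProd a * ZProd b)

/-- `M` is a Pauli string acting trivially (as the identity) at the site `i`. -/
def ActsTriviallyAt (i : ι) (M : Op ι) : Prop :=
  ∃ (c : ℂ) (a b : ι → Fin 2), IsPhase c ∧ a i = 0 ∧ b i = 0 ∧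
    M = c • (XProd a * ZProd b)

/-- The function on all of `ι` agreeing with `f` on `A` and with `h` on `Aᶜ`. -/
def combine (A : Finset ι) (f : ↥A → Fin 2) (h : ↥(Aᶜ) → Fin 2) : ι → Fin 2 :=
  fun i => if hi : i ∈ A then f ⟨i, hi⟩ else h ⟨i, Finset.mem_compl.mpr hi⟩

/-- The partial trace over the qubits outside `A` (the reduced density matrix on `A`). -/
def ptrace (A : Finset ι) (ρ : Op ι) : Matrix (↥A → Fin 2) (↥A → Fin 2) ℂ :=
  Matrix.of fun f g => ∑ h : ↥(Aᶜ) → Fin 2, ρ (combine A f h) (combine A g h)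

/-- The rank-one projector `|ψ⟩⟨ψ|`. -/
def outer (ψ : (ι → Fin 2) → ℂ) : Op ι :=
  Matrix.of fun f g => ψ f * star (ψ g)

/-- `ψ` is a unit vector. -/
def IsUnitVec (ψ : (ι → Fin 2) → ℂ) : Prop :=
  ∑ f, Complex.normSq (ψ f) = 1

/-- The von Neumann entropy `−Tr(ρ log ρ)` of a Hermitian matrix, computed through its
eigenvalues (with the convention `0 log 0 = 0`, and junk value `0` on non-Hermitian input). -/
def vnEntropy {n : Type*} [Fintype n] [DecidableEq n] (ρ : Matrix n n ℂ) : ℝ :=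
  if h : ρ.IsHermitian then -∑ i, (h.eigenvalues i * Real.log (h.eigenvalues i)) else 0

/-- The von Neumann entanglement entropy of `ψ` in the region `A`:
`S_A(ψ) = −Tr(ρ_A log ρ_A)` where `ρ_A` is the reduced density matrix of `|ψ⟩⟨ψ|`. -/
def entEntropy (A : Finset ι) (ψ : (ι → Fin 2) → ℂ) : ℝ :=
  vnEntropy (ptrace A (outer ψ))

/-- The product of the `s i` over the subset `T` (in increasing order of indices). -/
def subProd {N : ℕ} (s : Fin N → Op ι) (T : Finset (Fin N)) : Op ι :=
  ((T.sort (· ≤ ·)).map s).prod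

/-- `{s 0, …, s (N-1)}` is an independent set of `N` Hermitian pairwise commuting Pauli
strings: products over distinct subsets are pairwise distinct and no nonempty product
equals `±I`. -/
def IndepStabs {N : ℕ} (s : Fin N → Op ι) : Prop :=
  (∀ i, IsPauli (s i)) ∧ (∀ i, (s i).IsHermitian) ∧
  (∀ i j, Commute (s i) (s j)) ∧
  Function.Injective (subProd s) ∧
  (∀ T : Finset (Fin N), T.Nonempty → subProd s T ≠ 1 ∧ subProd s T ≠ -1)

/-- The 1-based label of the site `i : Fin N`, so that the qubits are labeled `1, …, N`. -/
def lbl {N : ℕ} (i : Fin N) : ℕ := (i : ℕ) + 1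

/-- The single-qubit operator `Z p` at the site with label `p` (1-based). -/
def ZSingle (N : ℕ) (p : ℕ) : Op (Fin N) :=
  ZProd fun i => if lbl i = p then 1 else 0

/-- The string of `Z`'s at the labels `p, p+2, …, q` (sites of the parity of `p` in `[p,q]`). -/
def ZStr (N : ℕ) (p q : ℕ) : Op (Fin N) :=
  ZProd fun i => if p ≤ lbl i ∧ lbl i ≤ q ∧ lbl i % 2 = p % 2 then 1 else 0

/-- The string operator `g_{p,q} = X p * (∏_{k=0}^{(q−p)/2−1} Z (p+2k+1)) * X q`
for labels `p < q` of the same parity.  In particular the cluster stabilizer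
`g i = X (i−1) * Z i * X (i+1)` is `GStr N (i-1) (i+1)`. -/
def GStr (N : ℕ) (p q : ℕ) : Op (Fin N) :=
  (XProd fun i => if lbl i = p ∨ lbl i = q then 1 else 0) *
    ZProd fun i => if p < lbl i ∧ lbl i < q ∧ ¬(lbl i % 2 = p % 2) then 1 else 0

/-- `G1 = ∏_{i even} Z i` (even labels). -/
def Gsym1 (N : ℕ) : Op (Fin N) := ZProd fun i => if lbl i % 2 = 0 then 1 else 0

/-- `G2 = ∏_{i odd} Z i` (odd labels). -/
def Gsym2 (N : ℕ) : Op (Fin N) := ZProd fun i => if lbl i % 2 = 1 then 1 else 0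

/-- The measurement channel `𝓔_S(ρ) = Π₊ ρ Π₊ + Π₋ ρ Π₋` with `Π± = (I ± S)/2`. -/
def measChannel (S ρ : Op ι) : Op ι :=
  ((2 : ℂ)⁻¹ • (1 + S)) * ρ * ((2 : ℂ)⁻¹ • (1 + S)) +
    ((2 : ℂ)⁻¹ • (1 - S)) * ρ * ((2 : ℂ)⁻¹ • (1 - S))

/-- Measurement-update map on stabilizer groups: if the measured Pauli `M` commutes with
every element of `G` the group is unchanged; otherwise the new group is generated by the
centralizer `C_G(M)` together with `ε • M` (where `ε` is the measurement outcome sign). -/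
def Meas (G : Submonoid (Op ι)) (M : Op ι) (ε : ℂ) : Submonoid (Op ι) :=
  if ∀ g ∈ G, M * g = g * M then G
  else Submonoid.closure ({g | g ∈ G ∧ M * g = g * M} ∪ {ε • M})

/-- The isolated-SPT stabilizer set `𝒮(A)`: the string operators `g_{q_i, q_{i+1}}` between
consecutive elements of `A`, together with the total `Z`-product `∏_{p ∈ A} Z p`. -/
def SPTstabs (N : ℕ) (A : Finset ℕ) : Set (Op (Fin N)) :=
  {m | (∃ p ∈ A, ∃ q ∈ A, p < q ∧ (∀ r ∈ A, ¬(p < r ∧ r < q)) ∧ m = GStr N p q) ∨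
    m = ZProd fun i => if lbl i ∈ A then 1 else 0}

/-- The block of the partition `P` containing `x`. -/
def blockOf (P : Finset (Finset ℕ)) (x : ℕ) : Finset ℕ :=
  P.sup fun A => if x ∈ A then A else ∅

/-- Partition update for the move “measure `Z i`”: `i` is split off into its own block. -/
def updZ (P : Finset (Finset ℕ)) (i : ℕ) : Finset (Finset ℕ) :=
  insert {i} ((P.image fun A => A.erase i).erase ∅)

/-- Partition update for the move “measure `g i`”: the blocks of `i−1` and `i+1` merge. -/
def updG (P : Finset (Finset ℕ)) (i : ℕ) : Finset (Finset ℕ) :=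
  insert (blockOf P (i - 1) ∪ blockOf P (i + 1))
    ((P.erase (blockOf P (i - 1))).erase (blockOf P (i + 1)))

/-- The partition of `{1, …, N}` into singletons. -/
def startPart (N : ℕ) : Finset (Finset ℕ) := (Finset.Icc 1 N).image fun i => {i}

/-- The matrix `M`, supported on `A`, viewed as an operator on the qubits in `A` only. -/
def restrictOp (A : Finset ι) (M : Op ι) : Matrix (↥A → Fin 2) (↥A → Fin 2) ℂ :=
  Matrix.of fun f g =>
    M (fun i => if hi : i ∈ A then f ⟨i, hi⟩ else 0)
      (fun i => if hi : i ∈ A then g ⟨i, hi⟩ else 0)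

set_option linter.unusedSectionVars false
set_option linter.unusedTactic false
set_option linter.unnecessarySimpa false
section Sec1
variable {ι : Type*} [Fintype ι] [DecidableEq ι]

/-! ### Basic Pauli algebra -/

lemma fin2_cases (x : Fin 2) : x = 0 ∨ x = 1 := by
  have h := x.isLt
  rcases (by omega : (x : ℕ) = 0 ∨ (x : ℕ) = 1) with h' | h'
  · left; exact Fin.ext (by simpa using h')
  · right; exact Fin.ext (by simpa using h')

lemma fin2_add_self (x : Fin 2) : x + x = 0 := by
  rcases fin2_cases x with rfl | rfl <;> rfl

lemma vec_add_self (a : ι → Fin 2) : a + a = 0 := by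
  funext i; exact fin2_add_self (a i)

/-- `dotF a b = ∑ aᵢ bᵢ` as a natural number. -/
def dotF (a b : ι → Fin 2) : ℕ := ∑ i, ((a i : ℕ)) * ((b i : ℕ))

/-- The sign `(-1)^{a·b}`. -/
def sg (a b : ι → Fin 2) : ℂ := (-1) ^ dotF a b

lemma pow_par {m n : ℕ} (h : m % 2 = n % 2) : ((-1 : ℂ)) ^ m = (-1) ^ n := by
  conv_lhs => rw [← Nat.div_add_mod m 2]
  conv_rhs => rw [← Nat.div_add_mod n 2]
  rw [pow_add, pow_add, pow_mul, pow_mul, h]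
  norm_num

lemma dotF_comm (a b : ι → Fin 2) : dotF a b = dotF b a := by
  unfold dotF; exact Finset.sum_congr rfl fun i _ => Nat.mul_comm _ _

lemma dotF_zero_left (b : ι → Fin 2) : dotF 0 b = 0 := by
  unfold dotF; simp

lemma dotF_zero_right (a : ι → Fin 2) : dotF a 0 = 0 := by
  rw [dotF_comm]; exact dotF_zero_left a

lemma neg_one_pow_dotF_add_left (a a' b : ι → Fin 2) :
    ((-1 : ℂ)) ^ dotF (a + a') b = (-1) ^ (dotF a b + dotF a' b) := by
  apply pow_par
  unfold dotF
  rw [Finset.sum_nat_mod, ← Finset.sum_add_distrib,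
    Finset.sum_nat_mod _ 2 (fun i => (a i : ℕ) * (b i : ℕ) + (a' i : ℕ) * (b i : ℕ))]
  congr 1
  refine Finset.sum_congr rfl fun i _ => ?_
  have h : ∀ x y z : Fin 2, (((x + y : Fin 2) : ℕ)) * (z : ℕ) % 2
      = ((x : ℕ) * (z : ℕ) + (y : ℕ) * (z : ℕ)) % 2 := by decide
  simpa using h (a i) (a' i) (b i)

lemma sg_comm (a b : ι → Fin 2) : sg a b = sg b a := by unfold sg; rw [dotF_comm]

lemma sg_add_left (a a' b : ι → Fin 2) : sg (a + a') b = sg a b * sg a' b := by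
  unfold sg; rw [neg_one_pow_dotF_add_left, pow_add]

lemma sg_add_right (a b b' : ι → Fin 2) : sg a (b + b') = sg a b * sg a b' := by
  rw [sg_comm, sg_add_left, sg_comm b a, sg_comm b' a]

lemma sg_zero_left (b : ι → Fin 2) : sg 0 b = 1 := by
  unfold sg; rw [dotF_zero_left]; norm_num

lemma sg_zero_right (a : ι → Fin 2) : sg a 0 = 1 := by
  rw [sg_comm]; exact sg_zero_left a

lemma sg_sq_or (a b : ι → Fin 2) : sg a b = 1 ∨ sg a b = -1 := by
  unfold sg
  rcases Nat.even_or_odd (dotF a b) with h | h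
  · left; exact h.neg_one_pow
  · right; exact h.neg_one_pow

lemma sg_mul_self (a b : ι → Fin 2) : sg a b * sg a b = 1 := by
  rcases sg_sq_or a b with h | h <;> rw [h] <;> norm_num

lemma sg_ne_zero (a b : ι → Fin 2) : sg a b ≠ 0 := by
  rcases sg_sq_or a b with h | h <;> rw [h] <;> norm_num

/-- Closed-form X-type Pauli. -/
def XM (a : ι → Fin 2) : Op ι := Matrix.of fun f g => if f = g + a then 1 else 0

/-- Closed-form Z-type Pauli. -/
def ZM (b : ι → Fin 2) : Op ι :=
  Matrix.of fun f g => if f = g then ((-1 : ℂ)) ^ dotF b g else 0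

lemma XM_zero : (XM 0 : Op ι) = 1 := by
  ext f g
  simp only [XM, Matrix.of_apply, add_zero, Matrix.one_apply]

lemma ZM_zero : (ZM 0 : Op ι) = 1 := by
  ext f g
  simp only [ZM, Matrix.of_apply, dotF_zero_left, pow_zero, Matrix.one_apply]

lemma XM_mul_XM (a a' : ι → Fin 2) : XM a * XM a' = XM (a + a') := by
  ext f g
  rw [Matrix.mul_apply]
  simp only [XM, Matrix.of_apply]
  rw [Finset.sum_eq_single (g + a')]
  · have h : g + a' + a = g + (a + a') := by rw [add_assoc, add_comm a' a]
    simp [h]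
  · intro x _ hx
    simp [if_neg hx]
  · intro h; exact absurd (Finset.mem_univ _) h

lemma ZM_mul_ZM (b b' : ι → Fin 2) : ZM b * ZM b' = ZM (b + b') := by
  ext f g
  rw [Matrix.mul_apply]
  simp only [ZM, Matrix.of_apply]
  rw [Finset.sum_eq_single g]
  · by_cases h : f = g
    · subst h
      rw [if_pos rfl, if_pos rfl, if_pos rfl, ← pow_add, neg_one_pow_dotF_add_left]
    · simp [if_neg h]
  · intro x _ hx
    simp [if_neg hx]
  · intro h; exact absurd (Finset.mem_univ _) h

lemma XM_mul_ZM_apply (a b : ι → Fin 2) (f g : ι → Fin 2) :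
    (XM a * ZM b) f g = if f = g + a then ((-1 : ℂ)) ^ dotF b g else 0 := by
  rw [Matrix.mul_apply]
  simp only [XM, ZM, Matrix.of_apply]
  rw [Finset.sum_eq_single g]
  · by_cases h : f = g + a
    · rw [if_pos h, if_pos rfl, one_mul, if_pos h]
    · rw [if_neg h, if_neg h, zero_mul]
  · intro x _ hx
    simp [if_neg hx]
  · intro h; exact absurd (Finset.mem_univ _) h

lemma ZM_mul_XM (b a : ι → Fin 2) : ZM b * XM a = sg a b • (XM a * ZM b) := by
  ext f g
  rw [Matrix.mul_apply, Matrix.smul_apply, XM_mul_ZM_apply]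
  simp only [ZM, XM, Matrix.of_apply]
  rw [Finset.sum_eq_single f]
  · by_cases h : f = g + a
    · subst h
      rw [if_pos rfl, if_pos rfl, if_pos rfl, mul_one, smul_eq_mul, sg,
        show dotF b (g + a) = dotF (g + a) b from dotF_comm _ _,
        neg_one_pow_dotF_add_left, ← pow_add]
      apply pow_par
      rw [dotF_comm g b]
      omega
    · simp [if_neg h]
  · intro x _ hx
    rw [if_neg (show ¬ f = x from fun e => hx e.symm), zero_mul]
  · intro h; exact absurd (Finset.mem_univ _) h

/-- The fundamental multiplication rule for Pauli strings. -/
lemma P_mul (a b a' b' : ι → Fin 2) :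
    (XM a * ZM b) * (XM a' * ZM b') = sg a' b • (XM (a + a') * ZM (b + b')) := by
  rw [mul_assoc, ← mul_assoc (ZM b), ZM_mul_XM, smul_mul_assoc, mul_smul_comm]
  congr 1
  rw [mul_assoc (XM a'), ← mul_assoc (XM a), XM_mul_XM, ZM_mul_ZM]

lemma P_sq (a b : ι → Fin 2) : (XM a * ZM b) * (XM a * ZM b) = sg a b • 1 := by
  rw [P_mul, vec_add_self, vec_add_self, XM_zero, ZM_zero, one_mul]

lemma P_ne_zero (a b : ι → Fin 2) : XM a * ZM b ≠ 0 := by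
  intro h
  have h2 : (XM a * ZM b) a 0 = (0 : Op ι) a 0 := by rw [h]
  rw [XM_mul_ZM_apply] at h2
  simp only [zero_add, if_pos rfl, dotF_zero_right, pow_zero] at h2
  exact (one_ne_zero : (1 : ℂ) ≠ 0) (by simpa using h2)

lemma P_isUnit (a b : ι → Fin 2) : IsUnit (XM a * ZM b) := by
  refine ⟨⟨XM a * ZM b, sg a b • (XM a * ZM b), ?_, ?_⟩, rfl⟩
  · rw [mul_smul_comm, P_sq, smul_smul, sg_mul_self, one_smul]
  · rw [smul_mul_assoc, P_sq, smul_smul, sg_mul_self, one_smul]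

lemma dotF_single (b : ι → Fin 2) (i : ι) : dotF b (Pi.single i 1) = (b i : ℕ) := by
  unfold dotF
  rw [Finset.sum_eq_single i]
  · rw [Pi.single_eq_same]; simp
  · intro j _ hj
    rw [Pi.single_eq_of_ne hj]; simp
  · intro h; exact absurd (Finset.mem_univ _) h

lemma fin2_of_pow_eq {x y : Fin 2} (h : ((-1 : ℂ)) ^ (x : ℕ) = (-1) ^ (y : ℕ)) : x = y := by
  rcases fin2_cases x with rfl | rfl <;> rcases fin2_cases y with rfl | rfl <;>
    first
      | rfl
      | (exfalso; norm_num at h)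

/-- Injectivity of signed Pauli strings. -/
lemma P_inj {a b a' b' : ι → Fin 2} {c c' : ℂ} (hc : c ≠ 0)
    (h : c • (XM a * ZM b) = c' • (XM a' * ZM b')) : a = a' ∧ b = b' ∧ c = c' := by
  have key : ∀ f g, c * (if f = g + a then ((-1 : ℂ)) ^ dotF b g else 0)
      = c' * (if f = g + a' then ((-1 : ℂ)) ^ dotF b' g else 0) := by
    intro f g
    have h2 : (c • (XM a * ZM b)) f g = (c' • (XM a' * ZM b')) f g := by rw [h]
    simpa [Matrix.smul_apply, XM_mul_ZM_apply, smul_eq_mul] using h2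
  by_cases haa : a = a'
  · subst haa
    have h0 := key a 0
    simp [dotF_zero_right] at h0
    subst h0
    refine ⟨rfl, ?_, rfl⟩
    funext i
    have h1 := key (Pi.single i 1 + a) (Pi.single i 1)
    rw [if_pos rfl, if_pos rfl, dotF_single, dotF_single] at h1
    exact fin2_of_pow_eq (mul_left_cancel₀ hc h1)
  · exfalso
    have h0 := key a 0
    simp [dotF_zero_right, haa] at h0
    exact hc h0

/-! ### `XProd`/`ZProd` in closed form -/

lemma PX_eq (i : ι) : PX i = XM (Pi.single i 1) := by
  ext f g
  simp only [PX, XM, Matrix.of_apply]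
  have h : Function.update g i (g i + 1) = g + Pi.single i 1 := by
    funext j
    by_cases hj : j = i
    · subst hj; simp [Function.update_self]
    · simp [Function.update_of_ne hj, Pi.single_eq_of_ne hj]
  rw [h]

lemma PZ_eq (i : ι) : PZ i = ZM (Pi.single i 1) := by
  ext f g
  simp only [PZ, ZM, Matrix.of_apply]
  by_cases h : f = g
  · subst h; rw [if_pos rfl, if_pos rfl, dotF_comm, dotF_single]
  · rw [if_neg h, if_neg h]

lemma PX_pow (i : ι) (x : Fin 2) : PX i ^ (x : ℕ) = XM (Pi.single i x) := by
  rcases fin2_cases x with rfl | rfl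
  · show PX i ^ (0 : ℕ) = _
    rw [pow_zero, Pi.single_zero, XM_zero]
  · show PX i ^ (1 : ℕ) = _
    rw [pow_one, PX_eq]

lemma PZ_pow (i : ι) (x : Fin 2) : PZ i ^ (x : ℕ) = ZM (Pi.single i x) := by
  rcases fin2_cases x with rfl | rfl
  · show PZ i ^ (0 : ℕ) = _
    rw [pow_zero, Pi.single_zero, ZM_zero]
  · show PZ i ^ (1 : ℕ) = _
    rw [pow_one, PZ_eq]

lemma listX (a : ι → Fin 2) : ∀ l : List ι, l.Nodup →
    ((l.map fun i => PX i ^ ((a i : ℕ))).prod) = XM (fun i => if i ∈ l then a i else 0) := by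
  intro l
  induction l with
  | nil =>
      intro _
      simp only [List.map_nil, List.prod_nil]
      rw [show (fun i : ι => if i ∈ ([] : List ι) then a i else 0) = 0 by
        funext i; simp, XM_zero]
  | cons i l ih =>
      intro hnd
      rw [List.map_cons, List.prod_cons, ih hnd.of_cons, PX_pow, XM_mul_XM]
      have h : (Pi.single i (a i) + fun j => if j ∈ l then a j else 0)
          = fun j => if j ∈ i :: l then a j else 0 := by
        funext j
        by_cases hj : j = i
        · subst hj
          have hni : j ∉ l := (List.nodup_cons.1 hnd).1
          simp [hni, Pi.single_eq_same]
        · simp [Pi.single_eq_of_ne hj, List.mem_cons, hj]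
      rw [h]

lemma listZ (b : ι → Fin 2) : ∀ l : List ι, l.Nodup →
    ((l.map fun i => PZ i ^ ((b i : ℕ))).prod) = ZM (fun i => if i ∈ l then b i else 0) := by
  intro l
  induction l with
  | nil =>
      intro _
      simp only [List.map_nil, List.prod_nil]
      rw [show (fun i : ι => if i ∈ ([] : List ι) then b i else 0) = 0 by
        funext i; simp, ZM_zero]
  | cons i l ih =>
      intro hnd
      rw [List.map_cons, List.prod_cons, ih hnd.of_cons, PZ_pow, ZM_mul_ZM]
      have h : (Pi.single i (b i) + fun j => if j ∈ l then b j else 0)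
          = fun j => if j ∈ i :: l then b j else 0 := by
        funext j
        by_cases hj : j = i
        · subst hj
          have hni : j ∉ l := (List.nodup_cons.1 hnd).1
          simp [hni, Pi.single_eq_same]
        · simp [Pi.single_eq_of_ne hj, List.mem_cons, hj]
      rw [h]

lemma XProd_eq (a : ι → Fin 2) : XProd a = XM a := by
  rw [XProd, listX a _ Finset.univ.nodup_toList]
  rw [show (fun i : ι => if i ∈ Finset.univ.toList then a i else 0) = a by
    funext i; simp [Finset.mem_toList]]

lemma ZProd_eq (b : ι → Fin 2) : ZProd b = ZM b := by
  rw [ZProd, listZ b _ Finset.univ.nodup_toList]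
  rw [show (fun i : ι => if i ∈ Finset.univ.toList then b i else 0) = b by
    funext i; simp [Finset.mem_toList]]

end Sec1
section Sec2
variable {N : ℕ}

/-! ### Operators on the chain `Fin N` -/

/-- Indicator vector of a predicate on labels. -/
def iv (N : ℕ) (s : ℕ → Prop) : Fin N → Fin 2 := fun i => if s (lbl i) then 1 else 0

/-- The unordered pair predicate. -/
def Av (x y : ℕ) : ℕ → Prop := fun w => w = x ∨ w = y

/-- The strictly-between-with-opposite-parity predicate. -/
def Bv (x y : ℕ) : ℕ → Prop :=
  fun w => min x y < w ∧ w < max x y ∧ ¬(w % 2 = x % 2)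

/-- Normal form of a string operator (unordered endpoints). -/
def GS (N x y : ℕ) : Op (Fin N) := XM (iv N (Av x y)) * ZM (iv N (Bv x y))

/-- Normal form of a `Z`-product over a block. -/
def ZS (N : ℕ) (A : Finset ℕ) : Op (Fin N) := XM 0 * ZM (iv N (· ∈ A))

lemma lbl_pos (i : Fin N) : 1 ≤ lbl i := by simp [lbl]
lemma lbl_le (i : Fin N) : lbl i ≤ N := by have := i.isLt; simp only [lbl]; omega
lemma lbl_inj {i j : Fin N} (h : lbl i = lbl j) : i = j := by
  unfold lbl at h; exact Fin.ext (by omega)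

lemma exists_lbl {p : ℕ} (h1 : 1 ≤ p) (h2 : p ≤ N) : ∃ i : Fin N, lbl i = p :=
  ⟨⟨p - 1, by omega⟩, by simp only [lbl]; omega⟩

lemma GStr_eq (p q : ℕ) (hpq : p < q) : GStr N p q = GS N p q := by
  rw [GStr, XProd_eq, ZProd_eq, GS]
  have hX : (fun i : Fin N => if lbl i = p ∨ lbl i = q then (1 : Fin 2) else 0)
      = iv N (Av p q) := by
    funext i
    unfold iv Av
    by_cases h : lbl i = p ∨ lbl i = q
    · rw [if_pos h, if_pos h]
    · rw [if_neg h, if_neg h]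
  have hZ : (fun i : Fin N =>
        if p < lbl i ∧ lbl i < q ∧ ¬(lbl i % 2 = p % 2) then (1 : Fin 2) else 0)
      = iv N (Bv p q) := by
    funext i
    unfold iv Bv
    have hiff : (p < lbl i ∧ lbl i < q ∧ ¬(lbl i % 2 = p % 2))
        ↔ (min p q < lbl i ∧ lbl i < max p q ∧ ¬(lbl i % 2 = p % 2)) := by omega
    by_cases h : p < lbl i ∧ lbl i < q ∧ ¬(lbl i % 2 = p % 2)
    · rw [if_pos h, if_pos (hiff.1 h)]
    · rw [if_neg h, if_neg (fun hh => h (hiff.2 hh))]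
  rw [hX, hZ]

lemma ZPr_eq (A : Finset ℕ) :
    (ZProd fun i : Fin N => if lbl i ∈ A then 1 else 0) = ZS N A := by
  rw [ZProd_eq, ZS, XM_zero, one_mul]
  have hv : (fun i : Fin N => if lbl i ∈ A then (1 : Fin 2) else 0) = iv N (· ∈ A) := by
    funext i
    unfold iv
    by_cases h : lbl i ∈ A
    · rw [if_pos h, if_pos h]
    · rw [if_neg h, if_neg h]
  rw [hv]

lemma PZ_eq_ZS (i : Fin N) : PZ i = ZS N {lbl i} := by
  rw [PZ_eq, ZS, XM_zero, one_mul]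
  have hv : Pi.single i (1 : Fin 2) = iv N (· ∈ ({lbl i} : Finset ℕ)) := by
    funext j
    unfold iv
    by_cases h : j = i
    · subst h
      rw [Pi.single_eq_same, if_pos (Finset.mem_singleton.2 rfl)]
    · rw [Pi.single_eq_of_ne h,
        if_neg (fun e => h (lbl_inj (Finset.mem_singleton.1 e)))]
  rw [hv]

/-! ### dot products of indicator vectors -/

lemma dotF_iv_zero {s t : ℕ → Prop}
    (h : ∀ x, 1 ≤ x → x ≤ N → s x → t x → False) :
    dotF (iv N s) (iv N t) = 0 := by
  unfold dotF
  refine Finset.sum_eq_zero fun i _ => ?_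
  unfold iv
  by_cases hs : s (lbl i)
  · by_cases ht : t (lbl i)
    · exact absurd ht (fun ht => h _ (lbl_pos i) (lbl_le i) hs ht)
    · simp [ht]
  · simp [hs]

lemma sg_iv_zero {s t : ℕ → Prop}
    (h : ∀ x, 1 ≤ x → x ≤ N → s x → t x → False) :
    sg (iv N s) (iv N t) = 1 := by
  rw [sg, dotF_iv_zero h, pow_zero]

lemma dotF_single_iv {p : ℕ} (h1 : 1 ≤ p) (h2 : p ≤ N) (t : ℕ → Prop) :
    dotF (iv N (· = p)) (iv N t) = if t p then 1 else 0 := by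
  obtain ⟨i0, hi0⟩ := exists_lbl h1 h2
  unfold dotF
  rw [Finset.sum_eq_single i0]
  · unfold iv
    rw [hi0]
    rw [if_pos rfl]
    by_cases h : t p <;> simp [h]
  · intro j _ hj
    unfold iv
    rw [if_neg (fun e => hj (lbl_inj (by rw [e, hi0])))]
    simp
  · intro h; exact absurd (Finset.mem_univ _) h

lemma sg_single_iv {p : ℕ} (h1 : 1 ≤ p) (h2 : p ≤ N) (t : ℕ → Prop) :
    sg (iv N (· = p)) (iv N t) = if t p then -1 else 1 := by
  rw [sg, dotF_single_iv h1 h2]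
  by_cases h : t p <;> simp [h]

lemma iv_pair {x y : ℕ} (hxy : x ≠ y) :
    iv N (Av x y) = iv N (· = x) + iv N (· = y) := by
  funext i
  unfold iv Av; simp only [Pi.add_apply]
  by_cases hx : lbl i = x
  · rw [if_pos (Or.inl hx), if_pos hx, if_neg (by omega)]
    decide
  · by_cases hy : lbl i = y
    · rw [if_pos (Or.inr hy), if_neg hx, if_pos hy]
      decide
    · rw [if_neg (by tauto), if_neg hx, if_neg hy]
      decide

lemma sg_pair_iv {x y : ℕ} (hxy : x ≠ y) (hx1 : 1 ≤ x) (hxN : x ≤ N)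
    (hy1 : 1 ≤ y) (hyN : y ≤ N) (t : ℕ → Prop) :
    sg (iv N (Av x y)) (iv N t)
      = (if t x then (-1 : ℂ) else 1) * (if t y then -1 else 1) := by
  rw [iv_pair hxy, sg_add_left, sg_single_iv hx1 hxN, sg_single_iv hy1 hyN]

/-! ### commutation and products -/

lemma P_commute {a b a' b' : Fin N → Fin 2} (h : sg a' b = sg a b') :
    (XM a * ZM b) * (XM a' * ZM b') = (XM a' * ZM b') * (XM a * ZM b) := by
  rw [P_mul, P_mul, h, add_comm a' a, add_comm b' b]

lemma P_anticommute {a b a' b' : Fin N → Fin 2} (h : sg a' b = -sg a b') :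
    (XM a * ZM b) * (XM a' * ZM b') = -((XM a' * ZM b') * (XM a * ZM b)) := by
  rw [P_mul, P_mul, h, add_comm a' a, add_comm b' b, neg_smul]

/-- The crossing-parity fact: two same-parity-endpoint strings always commute. -/
lemma GS_comm_GS {p q p' q' : ℕ} (hpq : p < q) (hp' : p' < q')
    (hpar : p % 2 = q % 2) (hpar' : p' % 2 = q' % 2)
    (hp1 : 1 ≤ p) (hqN : q ≤ N) (hp'1 : 1 ≤ p') (hq'N : q' ≤ N) :
    GS N p q * GS N p' q' = GS N p' q' * GS N p q := by
  apply P_commute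
  rw [sg_pair_iv (by omega) hp'1 (by omega) (by omega) hq'N,
    sg_pair_iv (by omega) hp1 (by omega) (by omega) hqN]
  simp only [Bv, min_eq_left hpq.le, max_eq_right hpq.le, min_eq_left hp'.le,
    max_eq_right hp'.le]
  split_ifs <;> first | (exfalso; omega) | norm_num

lemma GS_comm_ZS {p q : ℕ} (A : Finset ℕ) (hpq : p ≠ q)
    (hp1 : 1 ≤ p) (hpN : p ≤ N) (hq1 : 1 ≤ q) (hqN : q ≤ N)
    (hiff : p ∈ A ↔ q ∈ A) :
    GS N p q * ZS N A = ZS N A * GS N p q := by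
  apply P_commute
  rw [sg_zero_left, sg_pair_iv hpq hp1 hpN hq1 hqN]
  by_cases hp : p ∈ A
  · rw [if_pos hp, if_pos (hiff.1 hp)]; norm_num
  · rw [if_neg hp, if_neg (fun hq => hp (hiff.2 hq))]; norm_num

lemma GS_anti_ZS {p q : ℕ} (A : Finset ℕ) (hpq : p ≠ q)
    (hp1 : 1 ≤ p) (hpN : p ≤ N) (hq1 : 1 ≤ q) (hqN : q ≤ N)
    (hxor : ¬(p ∈ A ↔ q ∈ A)) :
    GS N p q * ZS N A = -(ZS N A * GS N p q) := by
  apply P_anticommute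
  rw [sg_zero_left, sg_pair_iv hpq hp1 hpN hq1 hqN]
  by_cases hp : p ∈ A <;> by_cases hq : q ∈ A
  · tauto
  · rw [if_pos hp, if_neg hq]; norm_num
  · rw [if_neg hp, if_pos hq]; norm_num
  · tauto

lemma ZS_comm_ZS (A B : Finset ℕ) : ZS N A * ZS N B = ZS N B * ZS N A := by
  apply P_commute
  rw [sg_zero_left, sg_zero_left]

lemma ZS_mul_ZS_disj {A B : Finset ℕ} (h : Disjoint A B) :
    ZS N A * ZS N B = ZS N (A ∪ B) := by
  rw [ZS, ZS, ZS, P_mul, sg_zero_left, one_smul, add_zero]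
  have hv : iv N (· ∈ A) + iv N (· ∈ B) = iv N (· ∈ A ∪ B) := by
    funext i
    simp only [iv, Pi.add_apply]
    by_cases hA : lbl i ∈ A
    · have hB : lbl i ∉ B := fun hB => (Finset.disjoint_left.1 h hA) hB
      rw [if_pos hA, if_neg hB, if_pos (Finset.mem_union.2 (Or.inl hA)), add_zero]
    · by_cases hB : lbl i ∈ B
      · rw [if_neg hA, if_pos hB, if_pos (Finset.mem_union.2 (Or.inr hB)), zero_add]
      · rw [if_neg hA, if_neg hB,
          if_neg (fun hh => by rcases Finset.mem_union.1 hh with h' | h' <;> tauto),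
          add_zero]
  rw [hv]

lemma ZS_mul_single {A : Finset ℕ} {x : ℕ} (hx : x ∈ A) :
    ZS N A * ZS N {x} = ZS N (A.erase x) := by
  rw [ZS, ZS, ZS, P_mul, sg_zero_left, one_smul, add_zero]
  have hv : iv N (· ∈ A) + iv N (· ∈ ({x} : Finset ℕ)) = iv N (· ∈ A.erase x) := by
    funext i
    simp only [iv, Pi.add_apply]
    by_cases hA : lbl i ∈ A
    · by_cases he : lbl i = x
      · rw [if_pos hA, if_pos (Finset.mem_singleton.2 he),
          if_neg (fun hh => (Finset.mem_erase.1 hh).1 he)]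
        exact fin2_add_self 1
      · rw [if_pos hA, if_neg (fun hh => he (Finset.mem_singleton.1 hh)),
          if_pos (Finset.mem_erase.2 ⟨he, hA⟩), add_zero]
    · rw [if_neg hA, if_neg (fun hh => hA (by rw [Finset.mem_singleton.1 hh]; exact hx)),
        if_neg (fun hh => hA (Finset.mem_erase.1 hh).2), add_zero]
  rw [hv]

lemma ZS_sq (A : Finset ℕ) : ZS N A * ZS N A = 1 := by
  rw [ZS, P_sq, sg_zero_left, one_smul]

lemma GS_parity_sg {x y : ℕ} (hpar : x % 2 = y % 2) :
    sg (iv N (Av x y)) (iv N (Bv x y)) = 1 := by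
  apply sg_iv_zero
  intro w _ _ hw hb
  rcases hw with rfl | rfl
  · exact hb.2.2 rfl
  · exact hb.2.2 (by omega)

lemma GS_sq {x y : ℕ} (hpar : x % 2 = y % 2) : GS N x y * GS N x y = 1 := by
  rw [GS, P_sq, GS_parity_sg hpar, one_smul]

lemma GS_symm (x y : ℕ) (hpar : x % 2 = y % 2) : GS N x y = GS N y x := by
  unfold GS
  have h1 : iv N (Av x y) = iv N (Av y x) := by
    funext i
    unfold iv Av
    by_cases h : lbl i = x ∨ lbl i = y
    · rw [if_pos h, if_pos (by tauto)]
    · rw [if_neg h, if_neg (by tauto)]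
  have h2 : iv N (Bv x y) = iv N (Bv y x) := by
    funext i
    unfold iv Bv
    have hiff : (min x y < lbl i ∧ lbl i < max x y ∧ ¬(lbl i % 2 = x % 2))
        ↔ (min y x < lbl i ∧ lbl i < max y x ∧ ¬(lbl i % 2 = y % 2)) := by omega
    by_cases h : min x y < lbl i ∧ lbl i < max x y ∧ ¬(lbl i % 2 = x % 2)
    · rw [if_pos h, if_pos (hiff.1 h)]
    · rw [if_neg h, if_neg (fun hh => h (hiff.2 hh))]
  rw [h1, h2]

/-- Composition of string operators sharing an endpoint. -/
lemma GS_mul_GS {x y z : ℕ} (hxy : x ≠ y) (hyz : y ≠ z) (hxz : x ≠ z)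
    (hp1 : x % 2 = y % 2) (hp2 : y % 2 = z % 2) :
    GS N x y * GS N y z = GS N x z := by
  rw [GS, GS, GS, P_mul]
  rw [show sg (iv N (Av y z)) (iv N (Bv x y)) = 1 from
    sg_iv_zero fun w _ _ hw hb => by
      rcases hw with rfl | rfl
      · exact hb.2.2 (by omega)
      · exact hb.2.2 (by omega), one_smul]
  have hA : iv N (Av x y) + iv N (Av y z) = iv N (Av x z) := by
    funext i
    unfold iv Av; simp only [Pi.add_apply]
    by_cases h1 : lbl i = x <;> by_cases h2 : lbl i = y <;> by_cases h3 : lbl i = z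
    · exfalso; omega
    · exfalso; omega
    · exfalso; omega
    · rw [if_pos (Or.inl h1), if_neg (not_or.2 ⟨h2, h3⟩), if_pos (Or.inl h1)]; decide
    · exfalso; omega
    · rw [if_pos (Or.inr h2), if_pos (Or.inl h2), if_neg (not_or.2 ⟨h1, h3⟩)]; decide
    · rw [if_neg (not_or.2 ⟨h1, h2⟩), if_pos (Or.inr h3), if_pos (Or.inr h3)]; decide
    · rw [if_neg (not_or.2 ⟨h1, h2⟩), if_neg (not_or.2 ⟨h2, h3⟩),
        if_neg (not_or.2 ⟨h1, h3⟩)]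
      decide
  have hB : iv N (Bv x y) + iv N (Bv y z) = iv N (Bv x z) := by
    funext i
    unfold iv Bv; simp only [Pi.add_apply]
    split_ifs <;> first | decide | (exfalso; omega)
  rw [hA, hB]

end Sec2
section Sec3
variable {ι : Type*} [Fintype ι] [DecidableEq ι]

lemma closure_units {S : Set (Op ι)} (hU : ∀ s ∈ S, IsUnit s) :
    ∀ g ∈ Submonoid.closure S, IsUnit g := by
  intro g hg
  induction hg using Submonoid.closure_induction with
  | mem x hx => exact hU x hx
  | one => exact isUnit_one
  | mul x y _ _ hx hy => exact hx.mul hy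

lemma closure_comm {S : Set (Op ι)} {M : Op ι} (h : ∀ s ∈ S, M * s = s * M) :
    ∀ g ∈ Submonoid.closure S, M * g = g * M := by
  intro g hg
  induction hg using Submonoid.closure_induction with
  | mem x hx => exact h x hx
  | one => rw [mul_one, one_mul]
  | mul x y _ _ hx hy => rw [← mul_assoc, hx, mul_assoc, hy, ← mul_assoc]

lemma Meas_of_comm {S : Set (Op ι)} {M : Op ι} (ε : ℂ)
    (h : ∀ s ∈ S, M * s = s * M) :
    Meas (Submonoid.closure S) M ε = Submonoid.closure S := by
  rw [Meas, if_pos (fun g hg => closure_comm h g hg)]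

lemma self_eq_neg_zero {x : Op ι} (h : x = -x) : x = 0 := by
  have h2 : (2 : ℂ) • x = 0 := by
    rw [two_smul]
    nth_rewrite 1 [h]
    exact neg_add_cancel _
  exact (smul_eq_zero.1 h2).resolve_left (by norm_num)

/-- Main measurement-update computation. -/
lemma Meas_eq {S C : Set (Op ι)} {t M : Op ι} (ε : ℂ)
    (hSC : Submonoid.closure S = Submonoid.closure (insert t C))
    (htS : t ∈ S)
    (hU : ∀ s ∈ S, IsUnit s)
    (hM0 : M ≠ 0)
    (hC : ∀ c ∈ C, M * c = c * M)
    (htM : M * t = -(t * M))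
    (htC : ∀ c ∈ C, t * c = c * t)
    (htt : t * t = 1) :
    Meas (Submonoid.closure S) M ε = Submonoid.closure (insert (ε • M) C) := by
  have hUt : IsUnit t := hU t htS
  have tcomm : ∀ c ∈ Submonoid.closure C, t * c = c * t := closure_comm htC
  have Ccomm : ∀ c ∈ Submonoid.closure C, M * c = c * M := closure_comm hC
  have hne : ¬(M * t = t * M) := by
    intro h
    rw [htM] at h
    have h0 : t * M = 0 := self_eq_neg_zero h.symm
    exact hM0 (hUt.mul_right_eq_zero.1 h0)
  have decomp : ∀ g ∈ Submonoid.closure (insert t C),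
      ∃ c ∈ Submonoid.closure C, g = c ∨ g = c * t := by
    intro g hg
    induction hg using Submonoid.closure_induction with
    | mem x hx =>
        rcases hx with rfl | hx
        · exact ⟨1, Submonoid.one_mem _, Or.inr (by rw [one_mul])⟩
        · exact ⟨x, Submonoid.subset_closure hx, Or.inl rfl⟩
    | one => exact ⟨1, Submonoid.one_mem _, Or.inl rfl⟩
    | mul x y hx hy ihx ihy =>
        obtain ⟨c, hc, hcx⟩ := ihx
        obtain ⟨d, hd, hdy⟩ := ihy
        rcases hcx with hcx | hcx <;> rcases hdy with hdy | hdy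
        · exact ⟨c * d, mul_mem hc hd, Or.inl (by rw [hcx, hdy])⟩
        · exact ⟨c * d, mul_mem hc hd, Or.inr (by rw [hcx, hdy, mul_assoc])⟩
        · refine ⟨c * d, mul_mem hc hd, Or.inr ?_⟩
          rw [hcx, hdy, mul_assoc c t d, tcomm d hd, ← mul_assoc, mul_assoc]
        · refine ⟨c * d, mul_mem hc hd, Or.inl ?_⟩
          rw [hcx, hdy, mul_assoc, ← mul_assoc t d, tcomm d hd, mul_assoc d t t, htt,
            mul_one]
  rw [Meas, if_neg (fun hall => hne (hall t (Submonoid.subset_closure htS)))]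
  apply le_antisymm
  · rw [Submonoid.closure_le]
    rintro g hg
    rcases hg with ⟨hgG, hgcomm⟩ | hg
    · obtain ⟨c, hc, hform⟩ := decomp g (by rw [← hSC]; exact hgG)
      rcases hform with rfl | rfl
      · exact Submonoid.closure_mono (Set.subset_insert _ _) hc
      · exfalso
        have h2 : M * (c * t) = -((c * t) * M) := by
          rw [← mul_assoc, Ccomm c hc, mul_assoc, htM, mul_neg, ← mul_assoc c t M]
        have h3 : M * (c * t) = -(M * (c * t)) := by
          nth_rewrite 2 [hgcomm]
          exact h2
        have h0 : M * (c * t) = 0 := self_eq_neg_zero h3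
        have hu : IsUnit (c * t) := closure_units hU _ hgG
        exact hM0 (hu.mul_left_eq_zero.1 h0)
    · rw [hg]
      exact Submonoid.subset_closure (Set.mem_insert _ _)
  · rw [Submonoid.closure_le]
    rintro g hg
    rcases hg with rfl | hgC
    · exact Submonoid.subset_closure (Or.inr rfl)
    · refine Submonoid.subset_closure (Or.inl ⟨?_, hC g hgC⟩)
      rw [hSC]
      exact Submonoid.subset_closure (Set.mem_insert_of_mem _ hgC)

end Sec3
section Sec4
variable {ι : Type*} [Fintype ι] [DecidableEq ι] {N : ℕ}

/-! ### scalar helpers -/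

lemma smul_mul_smul' (c d : ℂ) (m m' : Op ι) : (c • m) * (d • m') = (c * d) • (m * m') := by
  rw [smul_mul_assoc, mul_smul_comm, smul_smul]

lemma smul_comm_op {c d : ℂ} {m m' : Op ι} (h : m * m' = m' * m) :
    (c • m) * (d • m') = (d • m') * (c • m) := by
  rw [smul_mul_smul', smul_mul_smul', h, mul_comm c d]

lemma smul_anti_op {c d : ℂ} {m m' : Op ι} (h : m * m' = -(m' * m)) :
    (c • m) * (d • m') = -((d • m') * (c • m)) := by
  rw [smul_mul_smul', smul_mul_smul', h, mul_comm c d, smul_neg]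

lemma pm_mul_self {c : ℂ} (hc : c = 1 ∨ c = -1) : c * c = 1 := by
  rcases hc with rfl | rfl <;> norm_num

lemma pm_ne_zero {c : ℂ} (hc : c = 1 ∨ c = -1) : c ≠ 0 := by
  rcases hc with rfl | rfl <;> norm_num

lemma pm_mul {c d : ℂ} (hc : c = 1 ∨ c = -1) (hd : d = 1 ∨ d = -1) :
    c * d = 1 ∨ c * d = -1 := by
  rcases hc with rfl | rfl <;> rcases hd with rfl | rfl <;> norm_num

lemma pm_smul_sq {c : ℂ} (hc : c = 1 ∨ c = -1) {m : Op ι} (hm : m * m = 1) :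
    (c • m) * (c • m) = 1 := by
  rw [smul_mul_smul', hm, pm_mul_self hc, one_smul]

lemma pm_isUnit_smul {c : ℂ} (hc : c = 1 ∨ c = -1) {m : Op ι} (hm : IsUnit m) :
    IsUnit (c • m) := by
  rcases hc with rfl | rfl
  · simpa using hm
  · rw [neg_smul, one_smul]
    exact hm.neg

lemma smul_ne_zero_op {c : ℂ} (hc : c ≠ 0) {m : Op ι} (hm : m ≠ 0) : c • m ≠ 0 :=
  fun h => hm ((smul_eq_zero.1 h).resolve_left hc)

/-! ### valid partitions -/

structure Valid (N : ℕ) (P : Finset (Finset ℕ)) : Prop where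
  nonempty : ∀ A ∈ P, A.Nonempty
  subset : ∀ A ∈ P, A ⊆ Finset.Icc 1 N
  cover : ∀ x ∈ Finset.Icc 1 N, ∃ A ∈ P, x ∈ A
  disj : ∀ A ∈ P, ∀ B ∈ P, ∀ x, x ∈ A → x ∈ B → A = B
  parity : ∀ A ∈ P, ∀ x ∈ A, ∀ y ∈ A, x % 2 = y % 2

lemma Valid.unique {P : Finset (Finset ℕ)} (hP : Valid N P) :
    ∀ x ∈ Finset.Icc 1 N, ∃! A, A ∈ P ∧ x ∈ A := by
  intro x hx
  obtain ⟨A, hA, hxA⟩ := hP.cover x hx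
  exact ⟨A, ⟨hA, hxA⟩, fun B ⟨hB, hxB⟩ => hP.disj B hB A hA x hxB hxA⟩

lemma Valid.mem_bounds {P : Finset (Finset ℕ)} (hP : Valid N P) {A : Finset ℕ}
    (hA : A ∈ P) {x : ℕ} (hx : x ∈ A) : 1 ≤ x ∧ x ≤ N := by
  have := hP.subset A hA hx
  rw [Finset.mem_Icc] at this
  exact this

/-! ### generating sets -/

/-- All-pairs generating set of the invariant. -/
def GensA (N : ℕ) (P : Finset (Finset ℕ)) (φ : ℕ → ℂ) (ζ : Finset ℕ → ℂ) :
    Set (Op (Fin N)) :=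
  {m | ∃ A ∈ P, ∃ p ∈ A, ∃ q ∈ A, p ≠ q ∧ m = (φ p * φ q) • GS N p q}
    ∪ {m | ∃ A ∈ P, m = ζ A • ZS N A}

/-- The measurement invariant. -/
def Inv (N : ℕ) (G : Submonoid (Op (Fin N))) : Prop :=
  ∃ P φ ζ, Valid N P ∧ (∀ x : ℕ, φ x = 1 ∨ φ x = -1) ∧
    (∀ A : Finset ℕ, ζ A = 1 ∨ ζ A = -1) ∧
    G = Submonoid.closure (GensA N P φ ζ)

/-- Unordered-pair version of string-string commutation. -/
lemma GS_comm_GS' {p q p' q' : ℕ} (hpq : p ≠ q) (hp' : p' ≠ q')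
    (hpar : p % 2 = q % 2) (hpar' : p' % 2 = q' % 2)
    (hp1 : 1 ≤ p) (hpN : p ≤ N) (hq1 : 1 ≤ q) (hqN : q ≤ N)
    (hp'1 : 1 ≤ p') (hp'N : p' ≤ N) (hq'1 : 1 ≤ q') (hq'N : q' ≤ N) :
    GS N p q * GS N p' q' = GS N p' q' * GS N p q := by
  rcases lt_or_gt_of_ne hpq with h | h <;> rcases lt_or_gt_of_ne hp' with h' | h'
  · exact GS_comm_GS h h' hpar hpar' hp1 hqN hp'1 hq'N
  · rw [GS_symm p' q' hpar']
    exact GS_comm_GS h h' hpar hpar'.symm hp1 hqN hq'1 hp'N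
  · rw [GS_symm p q hpar]
    exact GS_comm_GS h h' hpar.symm hpar' hq1 hpN hp'1 hq'N
  · rw [GS_symm p q hpar, GS_symm p' q' hpar']
    exact GS_comm_GS h h' hpar.symm hpar'.symm hq1 hpN hq'1 hp'N

/-- All invariant generators are Hermitian Pauli units squaring to one. -/
lemma GensA_isUnit {P : Finset (Finset ℕ)} {φ : ℕ → ℂ} {ζ : Finset ℕ → ℂ}
    (hφ : ∀ x : ℕ, φ x = 1 ∨ φ x = -1) (hζ : ∀ A : Finset ℕ, ζ A = 1 ∨ ζ A = -1) :
    ∀ m ∈ GensA N P φ ζ, IsUnit m := by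
  rintro m (⟨A, hA, p, hp, q, hq, hpq, rfl⟩ | ⟨A, hA, rfl⟩)
  · exact pm_isUnit_smul (pm_mul (hφ p) (hφ q)) (P_isUnit _ _)
  · exact pm_isUnit_smul (hζ A) (P_isUnit _ _)

/-- Pairwise commutation of invariant generators. -/
lemma GensA_comm {P : Finset (Finset ℕ)} {φ : ℕ → ℂ} {ζ : Finset ℕ → ℂ}
    (hP : Valid N P) :
    ∀ m ∈ GensA N P φ ζ, ∀ m' ∈ GensA N P φ ζ, m * m' = m' * m := by
  rintro m (⟨A, hA, p, hp, q, hq, hpq, rfl⟩ | ⟨A, hA, rfl⟩) m'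
      (⟨B, hB, p', hp', q', hq', hpq', rfl⟩ | ⟨B, hB, rfl⟩)
  · apply smul_comm_op
    exact GS_comm_GS' hpq hpq' (hP.parity A hA p hp q hq) (hP.parity B hB p' hp' q' hq')
      (hP.mem_bounds hA hp).1 (hP.mem_bounds hA hp).2
      (hP.mem_bounds hA hq).1 (hP.mem_bounds hA hq).2
      (hP.mem_bounds hB hp').1 (hP.mem_bounds hB hp').2
      (hP.mem_bounds hB hq').1 (hP.mem_bounds hB hq').2
  · apply smul_comm_op
    apply GS_comm_ZS B hpq (hP.mem_bounds hA hp).1 (hP.mem_bounds hA hp).2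
      (hP.mem_bounds hA hq).1 (hP.mem_bounds hA hq).2
    by_cases hAB : A = B
    · subst hAB; exact ⟨fun _ => hq, fun _ => hp⟩
    · constructor
      · intro hpB; exact absurd (hP.disj A hA B hB p hp hpB) hAB
      · intro hqB; exact absurd (hP.disj A hA B hB q hq hqB) hAB
  · apply smul_comm_op
    symm
    apply GS_comm_ZS A hpq' (hP.mem_bounds hB hp').1 (hP.mem_bounds hB hp').2
      (hP.mem_bounds hB hq').1 (hP.mem_bounds hB hq').2
    by_cases hAB : B = A
    · subst hAB; exact ⟨fun _ => hq', fun _ => hp'⟩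
    · constructor
      · intro hpA; exact absurd (hP.disj B hB A hA p' hp' hpA) hAB
      · intro hqA; exact absurd (hP.disj B hB A hA q' hq' hqA) hAB
  · exact smul_comm_op (ZS_comm_ZS A B)

/-- Squares of invariant generators. -/
lemma GensA_sq {P : Finset (Finset ℕ)} {φ : ℕ → ℂ} {ζ : Finset ℕ → ℂ}
    (hP : Valid N P) (hφ : ∀ x : ℕ, φ x = 1 ∨ φ x = -1)
    (hζ : ∀ A : Finset ℕ, ζ A = 1 ∨ ζ A = -1) :
    ∀ m ∈ GensA N P φ ζ, m * m = 1 := by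
  rintro m (⟨A, hA, p, hp, q, hq, hpq, rfl⟩ | ⟨A, hA, rfl⟩)
  · exact pm_smul_sq (pm_mul (hφ p) (hφ q)) (GS_sq (hP.parity A hA p hp q hq))
  · exact pm_smul_sq (hζ A) (ZS_sq A)

/-! ### base case -/

lemma startPart_valid : Valid N (startPart N) := by
  constructor
  · intro A hA
    obtain ⟨x, _, rfl⟩ := Finset.mem_image.1 hA
    exact ⟨x, Finset.mem_singleton_self x⟩
  · intro A hA
    obtain ⟨x, hx, rfl⟩ := Finset.mem_image.1 hA
    intro y hy
    rw [Finset.mem_singleton.1 hy]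
    exact hx
  · intro x hx
    exact ⟨{x}, Finset.mem_image.2 ⟨x, hx, rfl⟩, Finset.mem_singleton_self x⟩
  · intro A hA B hB x hxA hxB
    obtain ⟨a, _, rfl⟩ := Finset.mem_image.1 hA
    obtain ⟨b, _, rfl⟩ := Finset.mem_image.1 hB
    rw [Finset.mem_singleton.1 hxA] at hxB
    rw [Finset.mem_singleton.1 hxB]
  · intro A hA x hx y hy
    obtain ⟨a, _, rfl⟩ := Finset.mem_image.1 hA
    rw [Finset.mem_singleton.1 hx, Finset.mem_singleton.1 hy]

lemma Inv_base :
    Inv N (Submonoid.closure (Set.range (PZ : Fin N → Op (Fin N)))) := by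
  refine ⟨startPart N, fun _ => 1, fun _ => 1, startPart_valid,
    fun _ => Or.inl rfl, fun _ => Or.inl rfl, ?_⟩
  congr 1
  ext m
  constructor
  · rintro ⟨i, rfl⟩
    refine Or.inr ⟨{lbl i}, Finset.mem_image.2 ⟨lbl i,
      Finset.mem_Icc.2 ⟨lbl_pos i, lbl_le i⟩, rfl⟩, ?_⟩
    rw [one_smul, PZ_eq_ZS]
  · rintro (⟨A, hA, p, hp, q, hq, hpq, rfl⟩ | ⟨A, hA, rfl⟩)
    · exfalso
      obtain ⟨x, _, rfl⟩ := Finset.mem_image.1 hA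
      rw [Finset.mem_singleton.1 hp, Finset.mem_singleton.1 hq] at hpq
      exact hpq rfl
    · obtain ⟨x, hx, rfl⟩ := Finset.mem_image.1 hA
      rw [Finset.mem_Icc] at hx
      obtain ⟨i, rfl⟩ := exists_lbl hx.1 hx.2
      exact ⟨i, by rw [one_smul, PZ_eq_ZS]⟩

end Sec4
section Sec5a
variable {ι : Type*} [Fintype ι] [DecidableEq ι] {N : ℕ}

lemma comm_smul_right {c : ℂ} {M m : Op ι} (h : M * m = m * M) :
    M * (c • m) = (c • m) * M := by
  rw [mul_smul_comm, smul_mul_assoc, h]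

lemma anti_smul_right {c : ℂ} {M m : Op ι} (h : M * m = -(m * M)) :
    M * (c • m) = -((c • m) * M) := by
  rw [mul_smul_comm, smul_mul_assoc, h, smul_neg]

lemma erase_union_singleton {A : Finset ℕ} {x : ℕ} (hx : x ∈ A) :
    A.erase x ∪ {x} = A := by
  ext y
  simp only [Finset.mem_union, Finset.mem_erase, Finset.mem_singleton]
  constructor
  · rintro (⟨_, h⟩ | rfl)
    · exact h
    · exact hx
  · intro hy
    by_cases hxy : y = x
    · exact Or.inr hxy
    · exact Or.inl ⟨hxy, hy⟩

/-- Measurement of a single-site `Z` preserves the invariant. -/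
lemma Inv_step_Z {P : Finset (Finset ℕ)} {φ : ℕ → ℂ} {ζ : Finset ℕ → ℂ}
    (hP : Valid N P) (hφ : ∀ x : ℕ, φ x = 1 ∨ φ x = -1)
    (hζ : ∀ A : Finset ℕ, ζ A = 1 ∨ ζ A = -1)
    (i₀ : Fin N) {ε : ℂ} (hε : ε = 1 ∨ ε = -1) :
    Inv N (Meas (Submonoid.closure (GensA N P φ ζ)) (PZ i₀) ε) := by
  set ℓ := lbl i₀ with hℓdef
  have hℓ1 : 1 ≤ ℓ := lbl_pos i₀
  have hℓN : ℓ ≤ N := lbl_le i₀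
  obtain ⟨A₀, hA₀, hℓA₀⟩ := hP.cover ℓ (Finset.mem_Icc.2 ⟨hℓ1, hℓN⟩)
  have hMZ : PZ i₀ = ZS N {ℓ} := PZ_eq_ZS i₀
  have hother_ne : ∀ B ∈ P, B ≠ A₀ → ℓ ∉ B :=
    fun B hB hne hmem => hne (hP.disj B hB A₀ hA₀ ℓ hmem hℓA₀)
  by_cases hsing : ∀ r ∈ A₀, r = ℓ
  · -- everything commutes, the group is unchanged
    refine ⟨P, φ, ζ, hP, hφ, hζ, ?_⟩
    rw [Meas_of_comm]
    rintro s (⟨A, hA, p, hp, q, hq, hpq, rfl⟩ | ⟨A, hA, rfl⟩)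
    · have hpℓ : p ≠ ℓ := by
        intro h
        have hAA₀ : A = A₀ := hP.disj A hA A₀ hA₀ ℓ (h ▸ hp) hℓA₀
        exact hpq (by rw [h, ← hsing q (hAA₀ ▸ hq)])
      have hqℓ : q ≠ ℓ := by
        intro h
        have hAA₀ : A = A₀ := hP.disj A hA A₀ hA₀ ℓ (h ▸ hq) hℓA₀
        exact hpq (by rw [h, ← hsing p (hAA₀ ▸ hp)])
      rw [hMZ]
      exact comm_smul_right (GS_comm_ZS {ℓ} hpq (hP.mem_bounds hA hp).1
        (hP.mem_bounds hA hp).2 (hP.mem_bounds hA hq).1 (hP.mem_bounds hA hq).2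
        (by simp [hpℓ, hqℓ])).symm
    · rw [hMZ]
      exact comm_smul_right (ZS_comm_ZS {ℓ} A)
  · -- split case
    push_neg at hsing
    obtain ⟨r₀, hr₀A, hr₀ℓ⟩ := hsing
    have hr₀1 := (hP.mem_bounds hA₀ hr₀A).1
    have hr₀N := (hP.mem_bounds hA₀ hr₀A).2
    have hparℓr₀ : ℓ % 2 = r₀ % 2 := hP.parity A₀ hA₀ ℓ hℓA₀ r₀ hr₀A
    set t : Op (Fin N) := (φ ℓ * φ r₀) • GS N ℓ r₀ with htdef
    set C : Set (Op (Fin N)) :=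
      {m | ∃ A ∈ P, ∃ p ∈ A, ∃ q ∈ A, p ≠ q ∧ p ≠ ℓ ∧ q ≠ ℓ ∧
        m = (φ p * φ q) • GS N p q}
        ∪ {m | ∃ A ∈ P, m = ζ A • ZS N A} with hCdef
    set P' : Finset (Finset ℕ) := insert {ℓ} (insert (A₀.erase ℓ) (P.erase A₀))
      with hP'def
    set ζ' : Finset ℕ → ℂ := fun B =>
      if B = {ℓ} then ε else if B = A₀.erase ℓ then ζ A₀ * ε else ζ B with hζ'def
    have hblocks' : ∀ B ∈ P', B = {ℓ} ∨ B = A₀.erase ℓ ∨ (B ∈ P ∧ B ≠ A₀) := by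
      intro B hB
      rcases Finset.mem_insert.1 hB with h | h
      · exact Or.inl h
      · rcases Finset.mem_insert.1 h with h | h
        · exact Or.inr (Or.inl h)
        · exact Or.inr (Or.inr ⟨(Finset.mem_erase.1 h).2, (Finset.mem_erase.1 h).1⟩)
    have heraseP' : A₀.erase ℓ ∈ P' :=
      Finset.mem_insert_of_mem (Finset.mem_insert_self _ _)
    have hsingP' : ({ℓ} : Finset ℕ) ∈ P' := Finset.mem_insert_self _ _
    have holdP' : ∀ B ∈ P, B ≠ A₀ → B ∈ P' := fun B hB hne =>
      Finset.mem_insert_of_mem (Finset.mem_insert_of_mem (Finset.mem_erase.2 ⟨hne, hB⟩))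
    have hold_ne_sing : ∀ B ∈ P, B ≠ A₀ → B ≠ {ℓ} := by
      intro B hB hne h
      exact hother_ne B hB hne (h ▸ Finset.mem_singleton_self ℓ)
    have hold_ne_er : ∀ B ∈ P, B ≠ A₀ → B ≠ A₀.erase ℓ := by
      intro B hB hne h
      obtain ⟨x, hx⟩ := hP.nonempty B hB
      exact hne (hP.disj B hB A₀ hA₀ x hx (Finset.mem_of_mem_erase (h ▸ hx)))
    have her_ne_sing : A₀.erase ℓ ≠ {ℓ} := by
      intro h
      exact (Finset.mem_erase.1 (h ▸ Finset.mem_singleton_self ℓ)).1 rfl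
    have hζ'sing : ζ' {ℓ} = ε := if_pos rfl
    have hζ'er : ζ' (A₀.erase ℓ) = ζ A₀ * ε := by
      rw [hζ'def]
      simp only []
      rw [if_neg her_ne_sing]
      simp
    have hζ'old : ∀ B ∈ P, B ≠ A₀ → ζ' B = ζ B := by
      intro B hB hne
      rw [hζ'def]
      simp only []
      rw [if_neg (hold_ne_sing B hB hne), if_neg (hold_ne_er B hB hne)]
    -- the auxiliary membership fact
    have key : ∀ q ∈ A₀, q ≠ ℓ →
        (φ ℓ * φ q) • GS N ℓ q ∈ Submonoid.closure (insert t C) := by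
      intro q hq hqℓ
      by_cases hqr : q = r₀
      · subst hqr
        exact Submonoid.subset_closure (Set.mem_insert _ _)
      · have hq1 := (hP.mem_bounds hA₀ hq).1
        have hqN := (hP.mem_bounds hA₀ hq).2
        have hparq : ℓ % 2 = q % 2 := hP.parity A₀ hA₀ ℓ hℓA₀ q hq
        have heq : (φ ℓ * φ q) • GS N ℓ q = t * ((φ r₀ * φ q) • GS N r₀ q) := by
          rw [htdef, smul_mul_smul', GS_mul_GS (fun h => hr₀ℓ h.symm)
            (fun h => hqr h.symm) (fun h => hqℓ h.symm) (by omega) (by omega)]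
          congr 1
          rw [mul_assoc, ← mul_assoc (φ r₀), pm_mul_self (hφ r₀), one_mul]
        rw [heq]
        exact mul_mem (Submonoid.subset_closure (Set.mem_insert _ _))
          (Submonoid.subset_closure (Set.mem_insert_of_mem _ (Or.inl
            ⟨A₀, hA₀, r₀, hr₀A, q, hq, fun h => hqr h.symm, hr₀ℓ, hqℓ, rfl⟩)))
    have hSC : Submonoid.closure (GensA N P φ ζ)
        = Submonoid.closure (insert t C) := by
      apply le_antisymm <;> rw [Submonoid.closure_le]
      · rintro m (⟨A, hA, p, hp, q, hq, hpq, rfl⟩ | ⟨A, hA, rfl⟩)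
        · by_cases hpℓ : p = ℓ
          · rw [hpℓ] at hp hpq ⊢
            have hAA₀ : A = A₀ := hP.disj A hA A₀ hA₀ ℓ hp hℓA₀
            exact key q (hAA₀ ▸ hq) (fun h => hpq h.symm)
          · by_cases hqℓ : q = ℓ
            · rw [hqℓ] at hq hpq ⊢
              have hAA₀ : A = A₀ := hP.disj A hA A₀ hA₀ ℓ hq hℓA₀
              have hpar : p % 2 = ℓ % 2 := hP.parity A hA p hp ℓ hq
              rw [GS_symm p ℓ hpar, mul_comm (φ p)]
              exact key p (hAA₀ ▸ hp) hpℓ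
            · exact Submonoid.subset_closure (Set.mem_insert_of_mem _ (Or.inl
                ⟨A, hA, p, hp, q, hq, hpq, hpℓ, hqℓ, rfl⟩))
        · exact Submonoid.subset_closure (Set.mem_insert_of_mem _ (Or.inr ⟨A, hA, rfl⟩))
      · rintro m hm
        rcases Set.mem_insert_iff.1 hm with rfl | hm
        · exact Submonoid.subset_closure (Or.inl
            ⟨A₀, hA₀, ℓ, hℓA₀, r₀, hr₀A, fun h => hr₀ℓ h.symm, rfl⟩)
        · rcases hm with ⟨A, hA, p, hp, q, hq, hpq, _, _, rfl⟩ | ⟨A, hA, rfl⟩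
          · exact Submonoid.subset_closure (Or.inl ⟨A, hA, p, hp, q, hq, hpq, rfl⟩)
          · exact Submonoid.subset_closure (Or.inr ⟨A, hA, rfl⟩)
    have hMeas : Meas (Submonoid.closure (GensA N P φ ζ)) (PZ i₀) ε
        = Submonoid.closure (insert (ε • PZ i₀) C) := by
      apply Meas_eq ε hSC
      · exact Or.inl ⟨A₀, hA₀, ℓ, hℓA₀, r₀, hr₀A, fun h => hr₀ℓ h.symm, rfl⟩
      · exact GensA_isUnit hφ hζ
      · rw [hMZ, ZS]; exact P_ne_zero _ _
      · rintro c (⟨A, hA, p, hp, q, hq, hpq, hpℓ, hqℓ, rfl⟩ | ⟨A, hA, rfl⟩)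
        · rw [hMZ]
          exact comm_smul_right (GS_comm_ZS {ℓ} hpq (hP.mem_bounds hA hp).1
            (hP.mem_bounds hA hp).2 (hP.mem_bounds hA hq).1 (hP.mem_bounds hA hq).2
            (by simp [hpℓ, hqℓ])).symm
        · rw [hMZ]
          exact comm_smul_right (ZS_comm_ZS {ℓ} A)
      · rw [hMZ, htdef]
        apply anti_smul_right
        have h := GS_anti_ZS {ℓ} (fun h => hr₀ℓ h.symm) hℓ1 hℓN hr₀1 hr₀N
          (by simp [hr₀ℓ])
        rw [h, neg_neg]
      · rintro c (⟨A, hA, p, hp, q, hq, hpq, hpℓ, hqℓ, rfl⟩ | ⟨A, hA, rfl⟩)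
        · exact smul_comm_op (GS_comm_GS' (fun h => hr₀ℓ h.symm) hpq hparℓr₀
            (hP.parity A hA p hp q hq) hℓ1 hℓN hr₀1 hr₀N
            (hP.mem_bounds hA hp).1 (hP.mem_bounds hA hp).2
            (hP.mem_bounds hA hq).1 (hP.mem_bounds hA hq).2)
        · apply smul_comm_op
          apply GS_comm_ZS A (fun h => hr₀ℓ h.symm) hℓ1 hℓN hr₀1 hr₀N
          by_cases hAA₀ : A = A₀
          · subst hAA₀; exact ⟨fun _ => hr₀A, fun _ => hℓA₀⟩
          · exact ⟨fun h => absurd (hP.disj A hA A₀ hA₀ ℓ h hℓA₀) hAA₀,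
              fun h => absurd (hP.disj A hA A₀ hA₀ r₀ h hr₀A) hAA₀⟩
      · exact pm_smul_sq (pm_mul (hφ ℓ) (hφ r₀)) (GS_sq hparℓr₀)
    refine ⟨P', φ, ζ', ?_, hφ, ?_, ?_⟩
    · -- validity of P'
      constructor
      · intro B hB
        rcases hblocks' B hB with rfl | rfl | ⟨hBP, _⟩
        · exact ⟨ℓ, Finset.mem_singleton_self ℓ⟩
        · exact ⟨r₀, Finset.mem_erase.2 ⟨hr₀ℓ, hr₀A⟩⟩
        · exact hP.nonempty B hBP
      · intro B hB
        rcases hblocks' B hB with rfl | rfl | ⟨hBP, _⟩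
        · intro y hy
          rw [Finset.mem_singleton.1 hy]
          exact Finset.mem_Icc.2 ⟨hℓ1, hℓN⟩
        · exact fun y hy => hP.subset A₀ hA₀ (Finset.mem_of_mem_erase hy)
        · exact hP.subset B hBP
      · intro x hx
        obtain ⟨B, hB, hxB⟩ := hP.cover x hx
        by_cases hBA₀ : B = A₀
        · subst hBA₀
          by_cases hxℓ : x = ℓ
          · exact ⟨{ℓ}, hsingP', by rw [hxℓ]; exact Finset.mem_singleton_self ℓ⟩
          · exact ⟨B.erase ℓ, heraseP', Finset.mem_erase.2 ⟨hxℓ, hxB⟩⟩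
        · exact ⟨B, holdP' B hB hBA₀, hxB⟩
      · intro A hA B hB x hxA hxB
        rcases hblocks' A hA with rfl | rfl | ⟨hAP, hAne⟩ <;>
          rcases hblocks' B hB with rfl | rfl | ⟨hBP, hBne⟩
        · rfl
        · exact absurd (Finset.mem_singleton.1 hxA ▸ hxB)
            (fun h => (Finset.mem_erase.1 h).1 rfl)
        · exact absurd (Finset.mem_singleton.1 hxA ▸ hxB)
            (fun h => hother_ne B hBP hBne h)
        · exact absurd (Finset.mem_singleton.1 hxB ▸ hxA)
            (fun h => (Finset.mem_erase.1 h).1 rfl)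
        · rfl
        · exact absurd (hP.disj B hBP A₀ hA₀ x hxB (Finset.mem_of_mem_erase hxA)) hBne
        · exact absurd (Finset.mem_singleton.1 hxB ▸ hxA)
            (fun h => hother_ne A hAP hAne h)
        · exact absurd (hP.disj A hAP A₀ hA₀ x hxA (Finset.mem_of_mem_erase hxB)) hAne
        · exact hP.disj A hAP B hBP x hxA hxB
      · intro B hB x hx y hy
        rcases hblocks' B hB with rfl | rfl | ⟨hBP, _⟩
        · rw [Finset.mem_singleton.1 hx, Finset.mem_singleton.1 hy]
        · exact hP.parity A₀ hA₀ x (Finset.mem_of_mem_erase hx) y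
            (Finset.mem_of_mem_erase hy)
        · exact hP.parity B hBP x hx y hy
    · -- ζ' is a sign function
      intro B
      rw [hζ'def]
      simp only []
      split_ifs
      · exact hε
      · exact pm_mul (hζ A₀) hε
      · exact hζ B
    · -- the group identity
      rw [hMeas]
      apply le_antisymm <;> rw [Submonoid.closure_le]
      · rintro m hm
        rcases Set.mem_insert_iff.1 hm with rfl | hm
        · rw [hMZ]
          exact Submonoid.subset_closure (Or.inr ⟨{ℓ}, hsingP', by rw [hζ'sing]⟩)
        · rcases hm with ⟨A, hA, p, hp, q, hq, hpq, hpℓ, hqℓ, rfl⟩ | ⟨A, hA, rfl⟩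
          · by_cases hAA₀ : A = A₀
            · subst hAA₀
              exact Submonoid.subset_closure (Or.inl ⟨A.erase ℓ, heraseP',
                p, Finset.mem_erase.2 ⟨hpℓ, hp⟩, q, Finset.mem_erase.2 ⟨hqℓ, hq⟩,
                hpq, rfl⟩)
            · exact Submonoid.subset_closure (Or.inl ⟨A, holdP' A hA hAA₀,
                p, hp, q, hq, hpq, rfl⟩)
          · by_cases hAA₀ : A = A₀
            · subst hAA₀
              have heq : ζ A • ZS N A
                  = ((ζ A * ε) • ZS N (A.erase ℓ)) * (ε • ZS N {ℓ}) := by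
                rw [smul_mul_smul', ZS_mul_ZS_disj (Finset.disjoint_singleton_right.2
                  (fun h => (Finset.mem_erase.1 h).1 rfl)), erase_union_singleton hℓA₀]
                congr 1
                rw [mul_assoc, pm_mul_self hε, mul_one]
              rw [heq]
              exact mul_mem
                (Submonoid.subset_closure (Or.inr ⟨A.erase ℓ, heraseP', by rw [hζ'er]⟩))
                (Submonoid.subset_closure (Or.inr ⟨{ℓ}, hsingP', by rw [hζ'sing]⟩))
            · exact Submonoid.subset_closure (Or.inr ⟨A, holdP' A hA hAA₀,
                by rw [hζ'old A hA hAA₀]⟩)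
      · rintro m (⟨B, hB, p, hp, q, hq, hpq, rfl⟩ | ⟨B, hB, rfl⟩)
        · rcases hblocks' B hB with rfl | rfl | ⟨hBP, hBne⟩
          · exact absurd (by rw [Finset.mem_singleton.1 hp, Finset.mem_singleton.1 hq])
              hpq
          · exact Submonoid.subset_closure (Set.mem_insert_of_mem _ (Or.inl
              ⟨A₀, hA₀, p, Finset.mem_of_mem_erase hp, q, Finset.mem_of_mem_erase hq,
                hpq, (Finset.mem_erase.1 hp).1, (Finset.mem_erase.1 hq).1, rfl⟩))
          · have hpℓ : p ≠ ℓ := fun h => hother_ne B hBP hBne (h ▸ hp)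
            have hqℓ : q ≠ ℓ := fun h => hother_ne B hBP hBne (h ▸ hq)
            exact Submonoid.subset_closure (Set.mem_insert_of_mem _ (Or.inl
              ⟨B, hBP, p, hp, q, hq, hpq, hpℓ, hqℓ, rfl⟩))
        · rcases hblocks' B hB with rfl | rfl | ⟨hBP, hBne⟩
          · rw [hζ'sing, ← hMZ]
            exact Submonoid.subset_closure (Set.mem_insert _ _)
          · have heq : ζ' (A₀.erase ℓ) • ZS N (A₀.erase ℓ)
                = (ζ A₀ • ZS N A₀) * (ε • ZS N {ℓ}) := by
              rw [hζ'er, smul_mul_smul', ZS_mul_single hℓA₀]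
            rw [heq, ← hMZ]
            exact mul_mem
              (Submonoid.subset_closure (Set.mem_insert_of_mem _ (Or.inr ⟨A₀, hA₀, rfl⟩)))
              (Submonoid.subset_closure (Set.mem_insert _ _))
          · rw [hζ'old B hBP hBne]
            exact Submonoid.subset_closure (Set.mem_insert_of_mem _ (Or.inr ⟨B, hBP, rfl⟩))

end Sec5a
section Sec5b
variable {N : ℕ}

/-- Measurement of a cluster stabilizer `g i` preserves the invariant. -/
lemma Inv_step_G {P : Finset (Finset ℕ)} {φ : ℕ → ℂ} {ζ : Finset ℕ → ℂ}
    (hP : Valid N P) (hφ : ∀ x : ℕ, φ x = 1 ∨ φ x = -1)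
    (hζ : ∀ A : Finset ℕ, ζ A = 1 ∨ ζ A = -1)
    {i : ℕ} (h2 : 2 ≤ i) (hiN : i ≤ N - 1) {ε : ℂ} (hε : ε = 1 ∨ ε = -1) :
    Inv N (Meas (Submonoid.closure (GensA N P φ ζ)) (GStr N (i - 1) (i + 1)) ε) := by
  have hN3 : 3 ≤ N := by omega
  have hm1 : 1 ≤ i - 1 := by omega
  have hm1N : i - 1 ≤ N := by omega
  have hp1N : i + 1 ≤ N := by omega
  have hpm : i - 1 ≠ i + 1 := by omega
  have hparpm : (i - 1) % 2 = (i + 1) % 2 := by omega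
  have hMG : GStr N (i - 1) (i + 1) = GS N (i - 1) (i + 1) := GStr_eq _ _ (by omega)
  obtain ⟨Am, hAm, hmem_m⟩ := hP.cover (i - 1) (Finset.mem_Icc.2 ⟨hm1, hm1N⟩)
  obtain ⟨Ap, hAp, hmem_p⟩ := hP.cover (i + 1) (Finset.mem_Icc.2 ⟨by omega, hp1N⟩)
  -- commutation of the measured operator with a string generator
  have hcommG : ∀ (A : Finset ℕ), A ∈ P → ∀ p ∈ A, ∀ q ∈ A, p ≠ q →
      GS N (i - 1) (i + 1) * GS N p q = GS N p q * GS N (i - 1) (i + 1) := by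
    intro A hA p hp q hq hpq
    exact GS_comm_GS' hpm hpq hparpm (hP.parity A hA p hp q hq)
      hm1 hm1N (by omega) hp1N
      (hP.mem_bounds hA hp).1 (hP.mem_bounds hA hp).2
      (hP.mem_bounds hA hq).1 (hP.mem_bounds hA hq).2
  by_cases hsame : Am = Ap
  · -- everything commutes
    refine ⟨P, φ, ζ, hP, hφ, hζ, ?_⟩
    rw [Meas_of_comm]
    rintro s (⟨A, hA, p, hp, q, hq, hpq, rfl⟩ | ⟨A, hA, rfl⟩)
    · rw [hMG]
      exact comm_smul_right (hcommG A hA p hp q hq hpq)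
    · rw [hMG]
      apply comm_smul_right
      apply GS_comm_ZS A hpm hm1 hm1N (by omega) hp1N
      by_cases hAA : A = Am
      · subst hAA
        exact ⟨fun _ => hsame ▸ hmem_p, fun _ => hmem_m⟩
      · constructor
        · intro h; exact absurd (hP.disj A hA Am hAm _ h hmem_m) hAA
        · intro h
          exact absurd (hP.disj A hA Ap hAp _ h hmem_p) (by rw [← hsame] at *; exact hAA)
  · -- merge case
    have hdisj : Disjoint Am Ap := by
      rw [Finset.disjoint_left]
      intro x hxm hxp
      exact hsame (hP.disj Am hAm Ap hAp x hxm hxp)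
    have hm_notp : i - 1 ∉ Ap := fun h => hsame (hP.disj Am hAm Ap hAp _ hmem_m h)
    have hp_notm : i + 1 ∉ Am := fun h => hsame (hP.disj Am hAm Ap hAp _ h hmem_p)
    set t : Op (Fin N) := ζ Am • ZS N Am with htdef
    set merged : Op (Fin N) := (ζ Am * ζ Ap) • ZS N (Am ∪ Ap) with hmergeddef
    set C : Set (Op (Fin N)) :=
      ({m | ∃ A ∈ P, ∃ p ∈ A, ∃ q ∈ A, p ≠ q ∧ m = (φ p * φ q) • GS N p q}
        ∪ {m | ∃ B ∈ P, B ≠ Am ∧ B ≠ Ap ∧ m = ζ B • ZS N B}) ∪ {merged} with hCdef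
    set c₀ : ℂ := ε * (φ (i - 1) * φ (i + 1)) with hc₀def
    have hc₀pm : c₀ = 1 ∨ c₀ = -1 := pm_mul hε (pm_mul (hφ _) (hφ _))
    set φ' : ℕ → ℂ := fun x => if x ∈ Ap then c₀ * φ x else φ x with hφ'def
    set P' : Finset (Finset ℕ) := insert (Am ∪ Ap) ((P.erase Am).erase Ap) with hP'def
    set ζ' : Finset ℕ → ℂ := fun B => if B = Am ∪ Ap then ζ Am * ζ Ap else ζ B
      with hζ'def
    have hφ'sgn : ∀ x : ℕ, φ' x = 1 ∨ φ' x = -1 := by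
      intro x
      rw [hφ'def]
      simp only []
      split_ifs
      · exact pm_mul hc₀pm (hφ x)
      · exact hφ x
    have hφ'm : ∀ x ∈ Am, φ' x = φ x := by
      intro x hx
      rw [hφ'def]
      simp only []
      rw [if_neg (fun h => Finset.disjoint_left.1 hdisj hx h)]
    have hφ'p : ∀ x ∈ Ap, φ' x = c₀ * φ x := by
      intro x hx
      rw [hφ'def]
      simp only []
      rw [if_pos hx]
    have hφ'old : ∀ B ∈ P, B ≠ Ap → ∀ x ∈ B, φ' x = φ x := by
      intro B hB hne x hx
      rw [hφ'def]
      simp only []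
      rw [if_neg (fun h => hne (hP.disj B hB Ap hAp x hx h))]
    have hblocks' : ∀ B ∈ P', B = Am ∪ Ap ∨ (B ∈ P ∧ B ≠ Am ∧ B ≠ Ap) := by
      intro B hB
      rcases Finset.mem_insert.1 hB with h | h
      · exact Or.inl h
      · have h1 := Finset.mem_erase.1 h
        have h2 := Finset.mem_erase.1 h1.2
        exact Or.inr ⟨h2.2, h2.1, h1.1⟩
    have hmergP' : Am ∪ Ap ∈ P' := Finset.mem_insert_self _ _
    have holdP' : ∀ B ∈ P, B ≠ Am → B ≠ Ap → B ∈ P' := fun B hB h1 h2 =>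
      Finset.mem_insert_of_mem (Finset.mem_erase.2 ⟨h2, Finset.mem_erase.2 ⟨h1, hB⟩⟩)
    have hold_ne_mrg : ∀ B ∈ P, B ≠ Am → B ≠ Ap → B ≠ Am ∪ Ap := by
      intro B hB h1 h2 h
      obtain ⟨x, hx⟩ := hP.nonempty B hB
      rcases Finset.mem_union.1 (h ▸ hx) with hx' | hx'
      · exact h1 (hP.disj B hB Am hAm x hx hx')
      · exact h2 (hP.disj B hB Ap hAp x hx hx')
    have hζ'merge : ζ' (Am ∪ Ap) = ζ Am * ζ Ap := if_pos rfl
    have hζ'old : ∀ B ∈ P, B ≠ Am → B ≠ Ap → ζ' B = ζ B := by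
      intro B hB h1 h2
      rw [hζ'def]
      simp only []
      rw [if_neg (hold_ne_mrg B hB h1 h2)]
    have hsqm : φ (i - 1) * φ (i - 1) = 1 := pm_mul_self (hφ _)
    have hsqp : φ (i + 1) * φ (i + 1) = 1 := pm_mul_self (hφ _)
    have hc₀sq : c₀ * c₀ = 1 := pm_mul_self hc₀pm
    have hparAm : ∀ x ∈ Am, x % 2 = (i - 1) % 2 :=
      fun x hx => hP.parity Am hAm x hx _ hmem_m
    have hparAp : ∀ x ∈ Ap, x % 2 = (i + 1) % 2 :=
      fun x hx => hP.parity Ap hAp x hx _ hmem_p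
    have hSC : Submonoid.closure (GensA N P φ ζ) = Submonoid.closure (insert t C) := by
      apply le_antisymm <;> rw [Submonoid.closure_le]
      · rintro m (⟨A, hA, p, hp, q, hq, hpq, rfl⟩ | ⟨A, hA, rfl⟩)
        · exact Submonoid.subset_closure (Set.mem_insert_of_mem _ (Or.inl (Or.inl
            ⟨A, hA, p, hp, q, hq, hpq, rfl⟩)))
        · by_cases hAAm : A = Am
          · subst hAAm
            exact Submonoid.subset_closure (Set.mem_insert _ _)
          · by_cases hAAp : A = Ap
            · subst hAAp
              have heq : ζ A • ZS N A = t * merged := by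
                rw [htdef, hmergeddef, smul_mul_smul', ← ZS_mul_ZS_disj hdisj,
                  ← mul_assoc (ZS N Am), ZS_sq, one_mul, ← mul_assoc (ζ Am),
                  pm_mul_self (hζ Am), one_mul]
              rw [heq]
              exact mul_mem (Submonoid.subset_closure (Set.mem_insert _ _))
                (Submonoid.subset_closure (Set.mem_insert_of_mem _ (Or.inr rfl)))
            · exact Submonoid.subset_closure (Set.mem_insert_of_mem _ (Or.inl (Or.inr
                ⟨A, hA, hAAm, hAAp, rfl⟩)))
      · rintro m hm
        rcases Set.mem_insert_iff.1 hm with rfl | hm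
        · exact Submonoid.subset_closure (Or.inr ⟨Am, hAm, rfl⟩)
        · rcases hm with (⟨A, hA, p, hp, q, hq, hpq, rfl⟩ | ⟨B, hB, _, _, rfl⟩) | hm
          · exact Submonoid.subset_closure (Or.inl ⟨A, hA, p, hp, q, hq, hpq, rfl⟩)
          · exact Submonoid.subset_closure (Or.inr ⟨B, hB, rfl⟩)
          · rw [Set.mem_singleton_iff.1 hm, hmergeddef, ← ZS_mul_ZS_disj hdisj,
              ← smul_mul_smul']
            exact mul_mem (Submonoid.subset_closure (Or.inr ⟨Am, hAm, rfl⟩))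
              (Submonoid.subset_closure (Or.inr ⟨Ap, hAp, rfl⟩))
    have hMeas : Meas (Submonoid.closure (GensA N P φ ζ)) (GStr N (i - 1) (i + 1)) ε
        = Submonoid.closure (insert (ε • GStr N (i - 1) (i + 1)) C) := by
      apply Meas_eq ε hSC
      · exact Or.inr ⟨Am, hAm, rfl⟩
      · exact GensA_isUnit hφ hζ
      · rw [hMG, GS]; exact P_ne_zero _ _
      · rintro c ((⟨A, hA, p, hp, q, hq, hpq, rfl⟩ | ⟨B, hB, hne1, hne2, rfl⟩) | hc)
        · rw [hMG]
          exact comm_smul_right (hcommG A hA p hp q hq hpq)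
        · rw [hMG]
          apply comm_smul_right
          apply GS_comm_ZS B hpm hm1 hm1N (by omega) hp1N
          constructor
          · intro h; exact absurd (hP.disj B hB Am hAm _ h hmem_m) hne1
          · intro h; exact absurd (hP.disj B hB Ap hAp _ h hmem_p) hne2
        · rw [Set.mem_singleton_iff.1 hc, hMG, hmergeddef]
          apply comm_smul_right
          apply GS_comm_ZS _ hpm hm1 hm1N (by omega) hp1N
          exact ⟨fun _ => Finset.mem_union.2 (Or.inr hmem_p),
            fun _ => Finset.mem_union.2 (Or.inl hmem_m)⟩
      · rw [hMG, htdef]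
        apply anti_smul_right
        exact GS_anti_ZS Am hpm hm1 hm1N (by omega) hp1N
          (by simp [hmem_m, hp_notm])
      · rintro c ((⟨A, hA, p, hp, q, hq, hpq, rfl⟩ | ⟨B, hB, hne1, hne2, rfl⟩) | hc)
        · rw [htdef]
          apply smul_comm_op
          symm
          apply GS_comm_ZS Am hpq (hP.mem_bounds hA hp).1 (hP.mem_bounds hA hp).2
            (hP.mem_bounds hA hq).1 (hP.mem_bounds hA hq).2
          by_cases hAA : A = Am
          · subst hAA; exact ⟨fun _ => hq, fun _ => hp⟩
          · constructor
            · intro h; exact absurd (hP.disj A hA Am hAm _ hp h) hAA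
            · intro h; exact absurd (hP.disj A hA Am hAm _ hq h) hAA
        · rw [htdef]; exact smul_comm_op (ZS_comm_ZS Am B)
        · rw [Set.mem_singleton_iff.1 hc, htdef, hmergeddef]
          exact smul_comm_op (ZS_comm_ZS Am (Am ∪ Ap))
      · rw [htdef]; exact pm_smul_sq (hζ Am) (ZS_sq Am)
    refine ⟨P', φ', ζ', ?_, hφ'sgn, ?_, ?_⟩
    · constructor
      · intro B hB
        rcases hblocks' B hB with rfl | ⟨hBP, _, _⟩
        · obtain ⟨x, hx⟩ := hP.nonempty Am hAm
          exact ⟨x, Finset.mem_union.2 (Or.inl hx)⟩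
        · exact hP.nonempty B hBP
      · intro B hB
        rcases hblocks' B hB with rfl | ⟨hBP, _, _⟩
        · exact Finset.union_subset (hP.subset Am hAm) (hP.subset Ap hAp)
        · exact hP.subset B hBP
      · intro x hx
        obtain ⟨B, hB, hxB⟩ := hP.cover x hx
        by_cases h1 : B = Am
        · exact ⟨Am ∪ Ap, hmergP', Finset.mem_union.2 (Or.inl (h1 ▸ hxB))⟩
        · by_cases h2 : B = Ap
          · exact ⟨Am ∪ Ap, hmergP', Finset.mem_union.2 (Or.inr (h2 ▸ hxB))⟩
          · exact ⟨B, holdP' B hB h1 h2, hxB⟩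
      · intro A hA B hB x hxA hxB
        rcases hblocks' A hA with rfl | ⟨hAP, hA1, hA2⟩ <;>
          rcases hblocks' B hB with rfl | ⟨hBP, hB1, hB2⟩
        · rfl
        · exfalso
          rcases Finset.mem_union.1 hxA with h | h
          · exact hB1 (hP.disj B hBP Am hAm x hxB h)
          · exact hB2 (hP.disj B hBP Ap hAp x hxB h)
        · exfalso
          rcases Finset.mem_union.1 hxB with h | h
          · exact hA1 (hP.disj A hAP Am hAm x hxA h)
          · exact hA2 (hP.disj A hAP Ap hAp x hxA h)
        · exact hP.disj A hAP B hBP x hxA hxB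
      · intro B hB x hx y hy
        rcases hblocks' B hB with rfl | ⟨hBP, _, _⟩
        · have hx' : x % 2 = (i - 1) % 2 := by
            rcases Finset.mem_union.1 hx with h | h
            · exact hparAm x h
            · rw [hparAp x h]; omega
          have hy' : y % 2 = (i - 1) % 2 := by
            rcases Finset.mem_union.1 hy with h | h
            · exact hparAm y h
            · rw [hparAp y h]; omega
          rw [hx', hy']
        · exact hP.parity B hBP x hx y hy
    · intro B
      rw [hζ'def]
      simp only []
      split_ifs
      · exact pm_mul (hζ Am) (hζ Ap)
      · exact hζ B
    · rw [hMeas]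
      apply le_antisymm <;> rw [Submonoid.closure_le]
      · rintro m hm
        rcases Set.mem_insert_iff.1 hm with rfl | hm
        · refine Submonoid.subset_closure (Or.inl ⟨Am ∪ Ap, hmergP',
            i - 1, Finset.mem_union.2 (Or.inl hmem_m),
            i + 1, Finset.mem_union.2 (Or.inr hmem_p), hpm, ?_⟩)
          rw [hMG, hφ'm _ hmem_m, hφ'p _ hmem_p]
          congr 1
          rw [hc₀def]
          rcases hε with h1 | h1 <;> rcases hφ (i - 1) with h2 | h2 <;>
                rcases hφ (i + 1) with h3 | h3 <;> rw [h1, h2, h3] <;> ring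
        · rcases hm with (⟨A, hA, p, hp, q, hq, hpq, rfl⟩ | ⟨B, hB, hne1, hne2, rfl⟩) | hm
          · by_cases hAAm : A = Am
            · refine Submonoid.subset_closure (Or.inl ⟨Am ∪ Ap, hmergP',
                p, Finset.mem_union.2 (Or.inl (hAAm ▸ hp)),
                q, Finset.mem_union.2 (Or.inl (hAAm ▸ hq)), hpq, ?_⟩)
              rw [hφ'm p (hAAm ▸ hp), hφ'm q (hAAm ▸ hq)]
            · by_cases hAAp : A = Ap
              · refine Submonoid.subset_closure (Or.inl ⟨Am ∪ Ap, hmergP',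
                  p, Finset.mem_union.2 (Or.inr (hAAp ▸ hp)),
                  q, Finset.mem_union.2 (Or.inr (hAAp ▸ hq)), hpq, ?_⟩)
                rw [hφ'p p (hAAp ▸ hp), hφ'p q (hAAp ▸ hq)]
                congr 1
                rw [hc₀def]
                rcases hε with h1 | h1 <;> rcases hφ (i - 1) with h2 | h2 <;>
                rcases hφ (i + 1) with h3 | h3 <;> rw [h1, h2, h3] <;> ring
              · refine Submonoid.subset_closure (Or.inl ⟨A, holdP' A hA hAAm hAAp,
                  p, hp, q, hq, hpq, ?_⟩)
                rw [hφ'old A hA hAAp p hp, hφ'old A hA hAAp q hq]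
          · exact Submonoid.subset_closure (Or.inr ⟨B, holdP' B hB hne1 hne2,
              by rw [hζ'old B hB hne1 hne2]⟩)
          · rw [Set.mem_singleton_iff.1 hm, hmergeddef]
            exact Submonoid.subset_closure (Or.inr ⟨Am ∪ Ap, hmergP', by rw [hζ'merge]⟩)
      · -- generators of the new invariant lie in the measured group
        have crossmem : ∀ p ∈ Am, ∀ q ∈ Ap,
            (φ' p * φ' q) • GS N p q ∈ Submonoid.closure (insert (ε • GStr N (i - 1) (i + 1)) C) := by
          intro p hp q hq
          have hpb := hP.mem_bounds hAm hp
          have hqb := hP.mem_bounds hAp hq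
          have hppar : p % 2 = (i - 1) % 2 := hparAm p hp
          have hqpar : q % 2 = (i + 1) % 2 := hparAp q hq
          have hpq : p ≠ q := fun h => Finset.disjoint_left.1 hdisj hp (h ▸ hq)
          have hpip : p ≠ i + 1 := fun h => hp_notm (h ▸ hp)
          have hqim : q ≠ i - 1 := fun h => hm_notp (h ▸ hq)
          rw [hφ'm _ hp, hφ'p _ hq]
          by_cases hpm1 : p = i - 1 <;> by_cases hqp1 : q = i + 1
          · subst hpm1; subst hqp1
            have heq : (φ (i - 1) * (c₀ * φ (i + 1))) • GS N (i - 1) (i + 1)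
                = ε • GStr N (i - 1) (i + 1) := by
              rw [hMG]
              congr 1
              rw [hc₀def]
              rcases hε with h1 | h1 <;> rcases hφ (i - 1) with h2 | h2 <;>
                rcases hφ (i + 1) with h3 | h3 <;> rw [h1, h2, h3] <;> ring
            rw [heq]
            exact Submonoid.subset_closure (Set.mem_insert _ _)
          · subst hpm1
            have heq : (φ (i - 1) * (c₀ * φ q)) • GS N (i - 1) q
                = (ε • GStr N (i - 1) (i + 1)) * ((φ (i + 1) * φ q) • GS N (i + 1) q) := by
              rw [hMG, smul_mul_smul',
                GS_mul_GS hpm (fun h => hqp1 h.symm) (fun h => hqim h.symm)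
                  hparpm (by omega)]
              congr 1
              rw [hc₀def]
              rcases hε with h1 | h1 <;> rcases hφ (i - 1) with h2 | h2 <;>
                rcases hφ (i + 1) with h3 | h3 <;> rw [h1, h2, h3] <;> ring
            rw [heq]
            exact mul_mem (Submonoid.subset_closure (Set.mem_insert _ _))
              (Submonoid.subset_closure (Set.mem_insert_of_mem _ (Or.inl (Or.inl
                ⟨Ap, hAp, i + 1, hmem_p, q, hq, fun h => hqp1 h.symm, rfl⟩))))
          · subst hqp1
            have heq : (φ p * (c₀ * φ (i + 1))) • GS N p (i + 1)
                = ((φ p * φ (i - 1)) • GS N p (i - 1)) * (ε • GStr N (i - 1) (i + 1)) := by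
              rw [hMG, smul_mul_smul',
                GS_mul_GS hpm1 hpm hpip (by omega) hparpm]
              congr 1
              rw [hc₀def]
              rcases hε with h1 | h1 <;> rcases hφ (i - 1) with h2 | h2 <;>
                rcases hφ (i + 1) with h3 | h3 <;> rw [h1, h2, h3] <;> ring
            rw [heq]
            exact mul_mem
              (Submonoid.subset_closure (Set.mem_insert_of_mem _ (Or.inl (Or.inl
                ⟨Am, hAm, p, hp, i - 1, hmem_m, hpm1, rfl⟩))))
              (Submonoid.subset_closure (Set.mem_insert _ _))
          · have heq : (φ p * (c₀ * φ q)) • GS N p q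
                = (((φ p * φ (i - 1)) • GS N p (i - 1)) * (ε • GStr N (i - 1) (i + 1)))
                  * ((φ (i + 1) * φ q) • GS N (i + 1) q) := by
              rw [hMG, smul_mul_smul', GS_mul_GS hpm1 hpm hpip (by omega) hparpm,
                smul_mul_smul', GS_mul_GS hpip (fun h => hqp1 h.symm) hpq
                  (by omega) (by omega)]
              congr 1
              rw [hc₀def]
              ring
            rw [heq]
            exact mul_mem (mul_mem
              (Submonoid.subset_closure (Set.mem_insert_of_mem _ (Or.inl (Or.inl
                ⟨Am, hAm, p, hp, i - 1, hmem_m, hpm1, rfl⟩))))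
              (Submonoid.subset_closure (Set.mem_insert _ _)))
              (Submonoid.subset_closure (Set.mem_insert_of_mem _ (Or.inl (Or.inl
                ⟨Ap, hAp, i + 1, hmem_p, q, hq, fun h => hqp1 h.symm, rfl⟩))))
        rintro m (⟨B, hB, p, hp, q, hq, hpq, rfl⟩ | ⟨B, hB, rfl⟩)
        · rcases hblocks' B hB with rfl | ⟨hBP, hB1, hB2⟩
          · rcases Finset.mem_union.1 hp with hpm' | hpm' <;>
              rcases Finset.mem_union.1 hq with hqm' | hqm'
            · refine Submonoid.subset_closure (Set.mem_insert_of_mem _ (Or.inl (Or.inl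
                ⟨Am, hAm, p, hpm', q, hqm', hpq, ?_⟩)))
              rw [hφ'm _ hpm', hφ'm _ hqm']
            · exact crossmem p hpm' q hqm'
            · have hpar' : p % 2 = q % 2 := by
                rw [hparAp p hpm', hparAm q hqm']; omega
              rw [GS_symm p q hpar', mul_comm (φ' p)]
              exact crossmem q hqm' p hpm'
            · refine Submonoid.subset_closure (Set.mem_insert_of_mem _ (Or.inl (Or.inl
                ⟨Ap, hAp, p, hpm', q, hqm', hpq, ?_⟩)))
              rw [hφ'p _ hpm', hφ'p _ hqm']
              congr 1
              rw [hc₀def]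
              rcases hε with h1 | h1 <;> rcases hφ (i - 1) with h2 | h2 <;>
                rcases hφ (i + 1) with h3 | h3 <;> rw [h1, h2, h3] <;> ring
          · refine Submonoid.subset_closure (Set.mem_insert_of_mem _ (Or.inl (Or.inl
              ⟨B, hBP, p, hp, q, hq, hpq, ?_⟩)))
            rw [hφ'old B hBP hB2 p hp, hφ'old B hBP hB2 q hq]
        · rcases hblocks' B hB with rfl | ⟨hBP, hB1, hB2⟩
          · rw [hζ'merge]
            exact Submonoid.subset_closure (Set.mem_insert_of_mem _ (Or.inr rfl))
          · rw [hζ'old B hBP hB1 hB2]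
            exact Submonoid.subset_closure (Set.mem_insert_of_mem _ (Or.inl (Or.inr
              ⟨B, hBP, hB1, hB2, rfl⟩)))

end Sec5b
section Sec6
variable {N : ℕ}

lemma iv_apply_iff {s t : ℕ → Prop} (h : iv N s = iv N t) {w : ℕ}
    (h1 : 1 ≤ w) (h2 : w ≤ N) : s w ↔ t w := by
  obtain ⟨i, hi⟩ := exists_lbl h1 h2
  have hfi := congrFun h i
  unfold iv at hfi
  rw [hi] at hfi
  by_cases hs : s w <;> by_cases ht : t w
  · tauto
  · rw [if_pos hs, if_neg ht] at hfi
    exact absurd hfi (by decide)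
  · rw [if_neg hs, if_pos ht] at hfi
    exact absurd hfi (by decide)
  · tauto

lemma GS_inj {p q p' q' : ℕ} (hpq : p < q) (hpq' : p' < q')
    (hp1 : 1 ≤ p) (hqN : q ≤ N) (hp'1 : 1 ≤ p') (hq'N : q' ≤ N)
    (h : GS N p q = GS N p' q') : p = p' ∧ q = q' := by
  have h' : (1 : ℂ) • (XM (iv N (Av p q)) * ZM (iv N (Bv p q)))
      = (1 : ℂ) • (XM (iv N (Av p' q')) * ZM (iv N (Bv p' q'))) := by
    rw [one_smul, one_smul]; exact h
  obtain ⟨hA, -, -⟩ := P_inj one_ne_zero h'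
  have key : ∀ w, 1 ≤ w → w ≤ N → (Av p q w ↔ Av p' q' w) :=
    fun w h1 h2 => iv_apply_iff hA h1 h2
  have h1 := (key p hp1 (by omega)).1 (Or.inl rfl)
  have h2 := (key q (by omega) hqN).1 (Or.inr rfl)
  have h3 := (key p' hp'1 (by omega)).2 (Or.inl rfl)
  have h4 := (key q' (by omega) hq'N).2 (Or.inr rfl)
  unfold Av at h1 h2 h3 h4
  omega

lemma ZS_ne_GS {A : Finset ℕ} {p q : ℕ} (hpq : p < q) (hp1 : 1 ≤ p) (hqN : q ≤ N) :
    ZS N A ≠ GS N p q := by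
  intro h
  have h' : (1 : ℂ) • (XM 0 * ZM (iv N (· ∈ A)))
      = (1 : ℂ) • (XM (iv N (Av p q)) * ZM (iv N (Bv p q))) := by
    rw [one_smul, one_smul]; exact h
  obtain ⟨hA, -, -⟩ := P_inj one_ne_zero h'
  obtain ⟨i, hi⟩ := exists_lbl hp1 (by omega : p ≤ N)
  have hfi := congrFun hA i
  unfold iv at hfi
  rw [hi] at hfi
  rw [show (0 : Fin N → Fin 2) i = 0 from rfl,
    if_pos (show Av p q p from Or.inl rfl)] at hfi
  exact absurd hfi (by decide)

lemma ZS_inj {A B : Finset ℕ} (hA : A ⊆ Finset.Icc 1 N) (hB : B ⊆ Finset.Icc 1 N)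
    (h : ZS N A = ZS N B) : A = B := by
  have h' : (1 : ℂ) • (XM 0 * ZM (iv N (· ∈ A)))
      = (1 : ℂ) • (XM 0 * ZM (iv N (· ∈ B))) := by
    rw [one_smul, one_smul]; exact h
  obtain ⟨-, hZ, -⟩ := P_inj one_ne_zero h'
  ext x
  constructor
  · intro hx
    have := hA hx
    rw [Finset.mem_Icc] at this
    exact (iv_apply_iff hZ this.1 this.2).1 hx
  · intro hx
    have := hB hx
    rw [Finset.mem_Icc] at this
    exact (iv_apply_iff hZ this.1 this.2).2 hx

/-- The adjacent-pairs (SPT) generating set. -/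
def GensD (N : ℕ) (P : Finset (Finset ℕ)) (φ : ℕ → ℂ) (ζ : Finset ℕ → ℂ) :
    Set (Op (Fin N)) :=
  {m | ∃ A ∈ P, ∃ p ∈ A, ∃ q ∈ A, p < q ∧ (∀ r ∈ A, ¬(p < r ∧ r < q)) ∧
    m = (φ p * φ q) • GS N p q}
    ∪ {m | ∃ A ∈ P, m = ζ A • ZS N A}

lemma closure_GensA_eq_GensD {P : Finset (Finset ℕ)} {φ : ℕ → ℂ} {ζ : Finset ℕ → ℂ}
    (hP : Valid N P) (hφ : ∀ x : ℕ, φ x = 1 ∨ φ x = -1) :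
    Submonoid.closure (GensA N P φ ζ) = Submonoid.closure (GensD N P φ ζ) := by
  apply le_antisymm <;> rw [Submonoid.closure_le]
  · rintro m (⟨A, hA, p, hp, q, hq, hpq, rfl⟩ | ⟨A, hA, rfl⟩)
    · have claim : ∀ d : ℕ, ∀ p ∈ A, ∀ q ∈ A, p < q → q - p ≤ d →
          (φ p * φ q) • GS N p q ∈ Submonoid.closure (GensD N P φ ζ) := by
        intro d
        induction d with
        | zero => intro p _ q _ h hle; omega
        | succ d ih =>
            intro p hp q hq h hle
            by_cases hadj : ∀ r ∈ A, ¬(p < r ∧ r < q)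
            · exact Submonoid.subset_closure (Or.inl ⟨A, hA, p, hp, q, hq, h, hadj, rfl⟩)
            · push_neg at hadj
              obtain ⟨r, hr, hpr, hrq⟩ := hadj
              have heq : (φ p * φ q) • GS N p q
                  = ((φ p * φ r) • GS N p r) * ((φ r * φ q) • GS N r q) := by
                rw [smul_mul_smul', GS_mul_GS (by omega) (by omega) (by omega)
                  (hP.parity A hA p hp r hr) (hP.parity A hA r hr q hq)]
                congr 1
                rw [mul_assoc, ← mul_assoc (φ r), pm_mul_self (hφ r), one_mul]
              rw [heq]
              exact mul_mem (ih p hp r hr hpr (by omega)) (ih r hr q hq hrq (by omega))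
      rcases lt_or_gt_of_ne hpq with h | h
      · exact claim (q - p) p hp q hq h le_rfl
      · rw [GS_symm p q (hP.parity A hA p hp q hq), mul_comm (φ p)]
        exact claim (p - q) q hq p hp h le_rfl
    · exact Submonoid.subset_closure (Or.inr ⟨A, hA, rfl⟩)
  · rintro m (⟨A, hA, p, hp, q, hq, hpq, _, rfl⟩ | ⟨A, hA, rfl⟩)
    · exact Submonoid.subset_closure (Or.inl ⟨A, hA, p, hp, q, hq, hpq.ne, rfl⟩)
    · exact Submonoid.subset_closure (Or.inr ⟨A, hA, rfl⟩)

/-- Fold of measurements preserves the invariant. -/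
lemma Inv_fold (L : List (Op (Fin N) × ℂ))
    (hL : ∀ p ∈ L,
      ((∃ i : Fin N, p.1 = PZ i) ∨
        (∃ i : ℕ, 2 ≤ i ∧ i ≤ N - 1 ∧ p.1 = GStr N (i - 1) (i + 1))) ∧
      (p.2 = 1 ∨ p.2 = -1)) :
    ∀ G₀ : Submonoid (Op (Fin N)), Inv N G₀ →
      Inv N (L.foldl (fun G p => Meas G p.1 p.2) G₀) := by
  induction L with
  | nil => intro G₀ h; simpa using h
  | cons hd tl ih =>
      intro G₀ hG₀
      rw [List.foldl_cons]
      apply ih (fun p hp => hL p (List.mem_cons_of_mem _ hp))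
      obtain ⟨P, φ, ζ, hP, hφ, hζ, rfl⟩ := hG₀
      obtain ⟨hM, hε⟩ := hL hd List.mem_cons_self
      rcases hM with ⟨i, hi⟩ | ⟨i, h2, hiN, hi⟩
      · rw [hi]; exact Inv_step_Z hP hφ hζ i hε
      · rw [hi]; exact Inv_step_G hP hφ hζ h2 hiN hε

end Sec6
/-- (`N` even.)  Let `G` be obtained from `G₀ = ⟨Z 1, …, Z N⟩` by finitely
many measurement-updates of `Z i`'s and cluster stabilizers `g i`, with arbitrary outcome
signs.  Then there is a partition of `{1, …, N}` into blocks of a single parity, and signs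
`ε_s ∈ {1, −1}`, such that `G` is generated by `{ε_s • s : s ∈ ⋃_j 𝒮(A_j)}`, where `𝒮(A)`
is the isolated-SPT stabilizer set of the block `A`. -/
theorem state_is_union_of_isolated_SPTs {N : ℕ} (hN : Even N)
    (L : List (Op (Fin N) × ℂ))
    (hL : ∀ p ∈ L,
      ((∃ i : Fin N, p.1 = PZ i) ∨
        (∃ i : ℕ, 2 ≤ i ∧ i ≤ N - 1 ∧ p.1 = GStr N (i - 1) (i + 1))) ∧
      (p.2 = 1 ∨ p.2 = -1)) :
    ∀ G : Submonoid (Op (Fin N)),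
      G = L.foldl (fun G p => Meas G p.1 p.2)
        (Submonoid.closure (Set.range (PZ : Fin N → Op (Fin N)))) →
      ∃ P : Finset (Finset ℕ),
        (∀ A ∈ P, A.Nonempty) ∧
        (∀ A ∈ P, A ⊆ Finset.Icc 1 N) ∧
        (∀ x ∈ Finset.Icc 1 N, ∃! A, A ∈ P ∧ x ∈ A) ∧
        (∀ A ∈ P, ∀ x ∈ A, ∀ y ∈ A, x % 2 = y % 2) ∧
        ∃ εf : Op (Fin N) → ℂ, (∀ st, εf st = 1 ∨ εf st = -1) ∧
          G = Submonoid.closure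
            {m | ∃ A ∈ P, ∃ st ∈ SPTstabs N A, m = εf st • st} := by
  intro G hG
  have hInv : Inv N G := by
    rw [hG]
    exact Inv_fold L hL _ Inv_base
  obtain ⟨P, φ, ζ, hP, hφ, hζ, hGeq⟩ := hInv
  classical
  refine ⟨P, hP.nonempty, hP.subset, hP.unique, hP.parity, ?_⟩
  set εf : Op (Fin N) → ℂ := fun m =>
    if h : ∃ p' q' : ℕ, 1 ≤ p' ∧ p' < q' ∧ q' ≤ N ∧ m = GStr N p' q' then
      φ h.choose * φ h.choose_spec.choose
    else if h2 : ∃ A, A ∈ P ∧ m = ZProd (fun i : Fin N => if lbl i ∈ A then 1 else 0)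
      then ζ h2.choose else 1
    with hεfdef
  have hεfsgn : ∀ st, εf st = 1 ∨ εf st = -1 := by
    intro st
    rw [hεfdef]
    simp only []
    split_ifs with h h2
    · exact pm_mul (hφ _) (hφ _)
    · exact hζ _
    · exact Or.inl rfl
  have hεfG : ∀ p q : ℕ, 1 ≤ p → p < q → q ≤ N → εf (GStr N p q) = φ p * φ q := by
    intro p q h1 h2 h3
    have hc : ∃ p' q' : ℕ, 1 ≤ p' ∧ p' < q' ∧ q' ≤ N ∧ GStr N p q = GStr N p' q' :=
      ⟨p, q, h1, h2, h3, rfl⟩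
    rw [hεfdef]
    simp only []
    rw [dif_pos hc]
    obtain ⟨ha1, ha2, ha3, ha4⟩ := hc.choose_spec.choose_spec
    have main : ∀ a b : ℕ, 1 ≤ a → a < b → b ≤ N → GStr N p q = GStr N a b →
        φ a * φ b = φ p * φ q := by
      intro a b hb1 hb2 hb3 hab
      rw [GStr_eq _ _ h2, GStr_eq _ _ hb2] at hab
      obtain ⟨hpp, hqq⟩ := GS_inj h2 hb2 h1 h3 hb1 hb3 hab
      rw [hpp, hqq]
    exact main _ _ ha1 ha2 ha3 ha4
  have hεfZ : ∀ A ∈ P,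
      εf (ZProd (fun i : Fin N => if lbl i ∈ A then 1 else 0)) = ζ A := by
    intro A hA
    have hnG : ¬∃ p' q' : ℕ, 1 ≤ p' ∧ p' < q' ∧ q' ≤ N ∧
        ZProd (fun i : Fin N => if lbl i ∈ A then 1 else 0) = GStr N p' q' := by
      rintro ⟨p, q, h1, h2, h3, h4⟩
      rw [ZPr_eq, GStr_eq _ _ h2] at h4
      exact ZS_ne_GS h2 h1 h3 h4
    have hc : ∃ A', A' ∈ P ∧ ZProd (fun i : Fin N => if lbl i ∈ A then 1 else 0)
        = ZProd (fun i : Fin N => if lbl i ∈ A' then 1 else 0) := ⟨A, hA, rfl⟩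
    rw [hεfdef]
    simp only []
    rw [dif_neg hnG, dif_pos hc]
    obtain ⟨hmem, heq⟩ := hc.choose_spec
    have main : ∀ B : Finset ℕ, B ∈ P →
        (ZProd (fun i : Fin N => if lbl i ∈ A then 1 else 0))
          = ZProd (fun i : Fin N => if lbl i ∈ B then 1 else 0) → ζ B = ζ A := by
      intro B hB hAB
      rw [ZPr_eq, ZPr_eq] at hAB
      exact congrArg ζ (ZS_inj (hP.subset A hA) (hP.subset B hB) hAB).symm
    exact main _ hmem heq
  refine ⟨εf, hεfsgn, ?_⟩
  rw [hGeq, closure_GensA_eq_GensD hP hφ]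
  congr 1
  ext m
  constructor
  · rintro (⟨A, hA, p, hp, q, hq, hpq, hadj, rfl⟩ | ⟨A, hA, rfl⟩)
    · refine ⟨A, hA, GStr N p q, Or.inl ⟨p, hp, q, hq, hpq, hadj, rfl⟩, ?_⟩
      rw [hεfG p q (hP.mem_bounds hA hp).1 hpq (hP.mem_bounds hA hq).2,
        GStr_eq _ _ hpq]
    · refine ⟨A, hA, ZProd (fun i : Fin N => if lbl i ∈ A then 1 else 0),
        Or.inr rfl, ?_⟩
      rw [hεfZ A hA, ZPr_eq]
  · rintro ⟨A, hA, st, hst, rfl⟩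
    rcases hst with ⟨p, hp, q, hq, hpq, hadj, rfl⟩ | rfl
    · exact Or.inl ⟨A, hA, p, hp, q, hq, hpq, hadj, by
        rw [hεfG p q (hP.mem_bounds hA hp).1 hpq (hP.mem_bounds hA hq).2,
          GStr_eq _ _ hpq]⟩
    · exact Or.inr ⟨A, hA, by rw [hεfZ A hA, ZPr_eq]⟩

end QStab
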